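/- arXiv:1808.05923 — 2 statements merged into one kernel-verified Lean document; each statement's English description precedes it below -/
import Mathlib

section
/- Let n ≥ 1, n1 ≥ 2, m ≥ 1, r ≥ 0, let d0 ∈ U(n; 3^m), d1 ∈ U(n1; 3^m) (i.e., m1 = 0, m2 = m), let d2 be a column-balanced n1×r matrix with entries in {1,2}, and let D3 be the corresponding column augmented design. Then WD(D3) ≥ LBW3_3 = C(r) + (n²/(n+n1)²)·(3/2)^r·WD(d0) + (1/(n+n1)²)·(23/18)^{m+r}·( p2·(27/23)^{w2} + q2·(27/23)^{w2+1} + 2·( p3·(27/23)^{w3} + q3·(27/23)^{w3+1} ) ). Equality holds if and only if among the n1(n1−1) ordered pairs of distinct follow-up rows exactly p2 of them satisfy V_{ij}+T_{ij} = w2 and exactly q2 of them satisfy V_{ij}+T_{ij} = w2+1, and among the n·n1 pairs (i,j) with i an initial row and j a follow-up row exactly p3 of them satisfy V_{ij} = w3 and exactly q3 of them satisfy V_{ij} = w3+1. -/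
open Finset

noncomputable section

namespace CAUD

/-- The mapped point value `u = (2x+1)/(2q)`. -/
def uVal (q x : ℕ) : ℝ := (2 * (x : ℝ) + 1) / (2 * (q : ℝ))

/-- The squared wrap-around L2-discrepancy of an `N × M` design whose `k`-th
column takes values in `{0, …, q k - 1}`. -/
def WD {N M : ℕ} (q : Fin M → ℕ) (x : Fin N → Fin M → ℕ) : ℝ :=
  -((4 : ℝ) / 3) ^ M + (1 / (N : ℝ) ^ 2) *
    ∑ i : Fin N, ∑ j : Fin N, ∏ k : Fin M,
      ((3 : ℝ) / 2 - |uVal (q k) (x i k) - uVal (q k) (x j k)| *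
        (1 - |uVal (q k) (x i k) - uVal (q k) (x j k)|))

/-- A mixed-level U-type design in `U(N; 2^{m1} 3^{m2})`: the first `m1` columns are
two-level and balanced, the last `m2` columns are three-level and balanced. -/
def IsUType (N m1 m2 : ℕ) (d : Fin N → Fin (m1 + m2) → ℕ) : Prop :=
  ∀ k : Fin (m1 + m2),
    if (k : ℕ) < m1 then
      (∀ i, d i k < 2) ∧ ∀ v < 2, 2 * (univ.filter (fun i => d i k = v)).card = N
    else
      (∀ i, d i k < 3) ∧ ∀ v < 3, 3 * (univ.filter (fun i => d i k = v)).card = N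

/-- A column-balanced `n1 × r` matrix with entries in `{1, 2}`: every column has
exactly `n1/2` entries equal to 1 and `n1/2` entries equal to 2. -/
def IsBalanced (n1 r : ℕ) (d2 : Fin n1 → Fin r → ℕ) : Prop :=
  (∀ i k, d2 i k = 1 ∨ d2 i k = 2) ∧
  ∀ k, 2 * (univ.filter (fun i => d2 i k = 1)).card = n1 ∧
       2 * (univ.filter (fun i => d2 i k = 2)).card = n1

/-- The column augmented design: first `n` rows are `(d0, 0)`, last `n1` rows `(d1, d2)`. -/
def augDesign (n n1 m r : ℕ) (d0 : Fin n → Fin m → ℕ) (d1 : Fin n1 → Fin m → ℕ)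
    (d2 : Fin n1 → Fin r → ℕ) : Fin (n + n1) → Fin (m + r) → ℕ := fun i k =>
  if hi : (i : ℕ) < n then
    if hk : (k : ℕ) < m then d0 ⟨i, hi⟩ ⟨k, hk⟩ else 0
  else
    if hk : (k : ℕ) < m then d1 ⟨(i : ℕ) - n, by have := i.isLt; omega⟩ ⟨k, hk⟩
    else d2 ⟨(i : ℕ) - n, by have := i.isLt; omega⟩ ⟨(k : ℕ) - m, by have := k.isLt; omega⟩

/-- Append one blocking column: 0 on the initial rows, 1 on the follow-up rows. -/
def appendOne (n n1 M : ℕ) (D : Fin (n + n1) → Fin M → ℕ) :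
    Fin (n + n1) → Fin (M + 1) → ℕ := fun i k =>
  if hk : (k : ℕ) < M then D i ⟨k, hk⟩ else if (i : ℕ) < n then 0 else 1

/-- Append two blocking columns: the first is 0 on the initial rows and 1 on the
follow-up rows; the second is 0 on the initial rows and the first `n1/2` follow-up
rows, and 1 on the remaining follow-up rows. -/
def appendTwo (n n1 M : ℕ) (D : Fin (n + n1) → Fin M → ℕ) :
    Fin (n + n1) → Fin (M + 2) → ℕ := fun i k =>
  if hk : (k : ℕ) < M then D i ⟨k, hk⟩
  else if (k : ℕ) = M then (if (i : ℕ) < n then 0 else 1)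
  else (if (i : ℕ) < n + n1 / 2 then 0 else 1)

/-- Level sizes of the (possibly blocking-augmented) column augmented design:
first `m1` columns are two-level, the next `m2 + r` are three-level, anything
after that (blocking columns) is two-level. -/
def qfun (m1 m2 r k : ℕ) : ℕ :=
  if k < m1 then 2 else if k < m1 + m2 + r then 3 else 2

/-- Coincidence number among the first `m1` columns. -/
def Fco {N M : ℕ} (m1 : ℕ) (D : Fin N → Fin M → ℕ) (i j : Fin N) : ℕ :=
  (univ.filter (fun k : Fin M => (k : ℕ) < m1 ∧ D i k = D j k)).card

/-- Coincidence number among columns `m1, …, m1 + m2 - 1`. -/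
def Vco {N M : ℕ} (m1 m2 : ℕ) (D : Fin N → Fin M → ℕ) (i j : Fin N) : ℕ :=
  (univ.filter (fun k : Fin M => m1 ≤ (k : ℕ) ∧ (k : ℕ) < m1 + m2 ∧ D i k = D j k)).card

/-- Coincidence number among the columns `≥ m`, counting agreements with common
value in `{1, 2}`. -/
def Tco {N M : ℕ} (m : ℕ) (D : Fin N → Fin M → ℕ) (i j : Fin N) : ℕ :=
  (univ.filter (fun k : Fin M =>
    m ≤ (k : ℕ) ∧ D i k = D j k ∧ (D i k = 1 ∨ D i k = 2))).card

/-- Total coincidence number between two rows. -/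
def lam {N M : ℕ} (D : Fin N → Fin M → ℕ) (i j : Fin N) : ℕ :=
  (univ.filter (fun k : Fin M => D i k = D j k)).card

/-- Number of rows whose `k`-th entry is `u` and whose `l`-th entry is `v`. -/
def nuv {N M : ℕ} (d : Fin N → Fin M → ℕ) (k l : Fin M) (u v : ℕ) : ℕ :=
  (univ.filter (fun i : Fin N => d i k = u ∧ d i l = v)).card

/-- Non-orthogonality of a pair of columns. -/
def fNOD {N M : ℕ} (q : Fin M → ℕ) (d : Fin N → Fin M → ℕ) (k l : Fin M) : ℝ :=
  ∑ u ∈ Finset.range (q k), ∑ v ∈ Finset.range (q l),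
    ((nuv d k l u v : ℝ) - (N : ℝ) / ((q k : ℝ) * (q l : ℝ))) ^ 2

/-- The `E(f_NOD)` criterion: average non-orthogonality over all pairs of columns. -/
def EfNOD {N M : ℕ} (q : Fin M → ℕ) (d : Fin N → Fin M → ℕ) : ℝ :=
  (∑ k : Fin M, ∑ l : Fin M, if (k : ℕ) < (l : ℕ) then fNOD q d k l else 0) /
    (Nat.choose M 2 : ℝ)

/-- Stacking the stage designs `d 0, …, d (l-1)` on top of one another. -/
def stack (M : ℕ) (ns : ℕ → ℕ) (d : (j : ℕ) → Fin (ns j) → Fin M → ℕ) :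
    (l : ℕ) → Fin (∑ j ∈ Finset.range l, ns j) → Fin M → ℕ
  | 0 => fun _ _ => 0
  | l + 1 => fun i =>
    let i' : Fin ((∑ j ∈ Finset.range l, ns j) + ns l) :=
      Fin.cast (Finset.sum_range_succ ns l) i
    if h : (i' : ℕ) < ∑ j ∈ Finset.range l, ns j then
      stack M ns d l ⟨(i' : ℕ), h⟩
    else d l ⟨(i' : ℕ) - ∑ j ∈ Finset.range l, ns j, by have := i'.isLt; omega⟩

def aa : ℝ := Real.log (6 / 5)

def bb : ℝ := Real.log (27 / 23)

/-- The constant `C(s)`. -/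
def Cconst (n n1 m s : ℕ) : ℝ :=
  -(((4 : ℝ) / 3) ^ s - ((n : ℝ) ^ 2 / ((n : ℝ) + n1) ^ 2) * ((3 : ℝ) / 2) ^ s) * ((4 : ℝ) / 3) ^ m
  + ((n1 : ℝ) / ((n : ℝ) + n1) ^ 2) * ((3 : ℝ) / 2) ^ (m + s)

def phi1 (n1 m1 m2 r : ℕ) : ℝ :=
  aa * m1 * ((n1 : ℝ) - 2) / (2 * ((n1 : ℝ) - 1)) + bb * m2 * ((n1 : ℝ) - 3) / (3 * ((n1 : ℝ) - 1))
  + bb * r * ((n1 : ℝ) - 2) / (2 * ((n1 : ℝ) - 1))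

def phi2 (m1 m2 : ℕ) : ℝ := aa * m1 / 2 + bb * m2 / 3

def T1c (n1 m1 m2 r : ℕ) : ℝ := (n1 : ℝ) * ((n1 : ℝ) - 1) * Real.exp (phi1 n1 m1 m2 r)

def T2c (n n1 m1 m2 : ℕ) : ℝ := (n : ℝ) * (n1 : ℝ) * Real.exp (phi2 m1 m2)

/-- Lower bound `LBW3` (mixed-level case, Theorem 1). -/
def LBW3 (n n1 m1 m2 r : ℕ) (wd0 : ℝ) : ℝ :=
  Cconst n n1 (m1 + m2) r + ((n : ℝ) ^ 2 / ((n : ℝ) + n1) ^ 2) * ((3 : ℝ) / 2) ^ r * wd0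
  + (1 / ((n : ℝ) + n1) ^ 2) * ((5 : ℝ) / 4) ^ m1 * ((23 : ℝ) / 18) ^ (m2 + r) *
      (T1c n1 m1 m2 r + 2 * T2c n n1 m1 m2)

def phi1p (n1 m r : ℕ) : ℝ :=
  aa * m * ((n1 : ℝ) - 2) / (2 * ((n1 : ℝ) - 1)) + bb * r * ((n1 : ℝ) - 2) / (2 * ((n1 : ℝ) - 1))

def T1pc (n1 m r : ℕ) : ℝ := (n1 : ℝ) * ((n1 : ℝ) - 1) * Real.exp (phi1p n1 m r)

def w1 (m : ℕ) : ℕ := m / 2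

def q1c (n n1 m : ℕ) : ℝ := (m : ℝ) * n * n1 / 2 - (n : ℝ) * n1 * (w1 m : ℝ)

def p1c (n n1 m : ℕ) : ℝ := (n : ℝ) * n1 - q1c n n1 m

/-- Lower bound `LBW3` for a two-level initial design (Theorem 2). -/
def LBW32 (n n1 m r : ℕ) (wd0 : ℝ) : ℝ :=
  Cconst n n1 m r + ((n : ℝ) ^ 2 / ((n : ℝ) + n1) ^ 2) * ((3 : ℝ) / 2) ^ r * wd0
  + (1 / ((n : ℝ) + n1) ^ 2) * ((5 : ℝ) / 4) ^ m * ((23 : ℝ) / 18) ^ r *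
      (T1pc n1 m r + 2 * (p1c n n1 m * ((6 : ℝ) / 5) ^ w1 m + q1c n n1 m * ((6 : ℝ) / 5) ^ (w1 m + 1)))

def w2 (n1 m r : ℕ) : ℤ :=
  ⌊(m : ℝ) * ((n1 : ℝ) - 3) / (3 * ((n1 : ℝ) - 1)) + (r : ℝ) * ((n1 : ℝ) - 2) / (2 * ((n1 : ℝ) - 1))⌋

def q2c (n1 m r : ℕ) : ℝ :=
  (m : ℝ) * n1 * ((n1 : ℝ) - 3) / 3 + (r : ℝ) * n1 * ((n1 : ℝ) - 2) / 2
  - (n1 : ℝ) * ((n1 : ℝ) - 1) * (w2 n1 m r : ℝ)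

def p2c (n1 m r : ℕ) : ℝ := (n1 : ℝ) * ((n1 : ℝ) - 1) - q2c n1 m r

def w3 (m : ℕ) : ℕ := m / 3

def q3c (n n1 m : ℕ) : ℝ := (m : ℝ) * n * n1 / 3 - (n : ℝ) * n1 * (w3 m : ℝ)

def p3c (n n1 m : ℕ) : ℝ := (n : ℝ) * n1 - q3c n n1 m

/-- Lower bound `LBW3` for a three-level initial design (Theorem 3). -/
def LBW33 (n n1 m r : ℕ) (wd0 : ℝ) : ℝ :=
  Cconst n n1 m r + ((n : ℝ) ^ 2 / ((n : ℝ) + n1) ^ 2) * ((3 : ℝ) / 2) ^ r * wd0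
  + (1 / ((n : ℝ) + n1) ^ 2) * ((23 : ℝ) / 18) ^ (m + r) *
      (p2c n1 m r * ((27 : ℝ) / 23) ^ w2 n1 m r + q2c n1 m r * ((27 : ℝ) / 23) ^ (w2 n1 m r + 1)
       + 2 * (p3c n n1 m * ((27 : ℝ) / 23) ^ w3 m + q3c n n1 m * ((27 : ℝ) / 23) ^ (w3 m + 1)))

/-- Lower bound of Theorem 4 for a mixed-level initial design. -/
def LBW3b1 (n n1 m1 m2 r : ℕ) (wd0 : ℝ) : ℝ :=
  Cconst n n1 (m1 + m2) (r + 1) + ((n : ℝ) ^ 2 / ((n : ℝ) + n1) ^ 2) * ((3 : ℝ) / 2) ^ (r + 1) * wd0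
  + (1 / ((n : ℝ) + n1) ^ 2) * ((5 : ℝ) / 4) ^ m1 * ((23 : ℝ) / 18) ^ (m2 + r) *
      ((3 : ℝ) / 2 * T1c n1 m1 m2 r + 2 * ((5 : ℝ) / 4) * T2c n n1 m1 m2)

/-- Lower bound of Theorem 4 for a two-level initial design. -/
def LBW3b2 (n n1 m r : ℕ) (wd0 : ℝ) : ℝ :=
  Cconst n n1 m (r + 1) + ((n : ℝ) ^ 2 / ((n : ℝ) + n1) ^ 2) * ((3 : ℝ) / 2) ^ (r + 1) * wd0
  + (1 / ((n : ℝ) + n1) ^ 2) * ((5 : ℝ) / 4) ^ m * ((23 : ℝ) / 18) ^ r *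
      ((3 : ℝ) / 2 * T1pc n1 m r +
        2 * ((5 : ℝ) / 4) * (p1c n n1 m * ((6 : ℝ) / 5) ^ w1 m + q1c n n1 m * ((6 : ℝ) / 5) ^ (w1 m + 1)))

/-- Lower bound of Theorem 4 for a three-level initial design. -/
def LBW3b3 (n n1 m r : ℕ) (wd0 : ℝ) : ℝ :=
  Cconst n n1 m (r + 1) + ((n : ℝ) ^ 2 / ((n : ℝ) + n1) ^ 2) * ((3 : ℝ) / 2) ^ (r + 1) * wd0
  + (1 / ((n : ℝ) + n1) ^ 2) * ((23 : ℝ) / 18) ^ (m + r) *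
      ((3 : ℝ) / 2 * (p2c n1 m r * ((27 : ℝ) / 23) ^ w2 n1 m r
                      + q2c n1 m r * ((27 : ℝ) / 23) ^ (w2 n1 m r + 1))
       + 2 * ((5 : ℝ) / 4) * (p3c n n1 m * ((27 : ℝ) / 23) ^ w3 m
                              + q3c n n1 m * ((27 : ℝ) / 23) ^ (w3 m + 1)))

def phi1B (n1 m1 m2 r : ℕ) : ℝ :=
  aa * ((m1 : ℝ) + 1) * ((n1 : ℝ) - 2) / (2 * ((n1 : ℝ) - 1))
  + bb * m2 * ((n1 : ℝ) - 3) / (3 * ((n1 : ℝ) - 1))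
  + bb * r * ((n1 : ℝ) - 2) / (2 * ((n1 : ℝ) - 1))

def phi2B (m1 m2 : ℕ) : ℝ := aa * ((m1 : ℝ) + 1) / 2 + bb * m2 / 3

def T1Bc (n1 m1 m2 r : ℕ) : ℝ := (n1 : ℝ) * ((n1 : ℝ) - 1) * Real.exp (phi1B n1 m1 m2 r)

def T2Bc (n n1 m1 m2 : ℕ) : ℝ := (n : ℝ) * (n1 : ℝ) * Real.exp (phi2B m1 m2)

/-- Lower bound `LBW3B` (Theorem 5). -/
def LBW3B (n n1 m1 m2 r : ℕ) (wd0 : ℝ) : ℝ :=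
  Cconst n n1 (m1 + m2) (r + 2) + ((n : ℝ) ^ 2 / ((n : ℝ) + n1) ^ 2) * ((3 : ℝ) / 2) ^ (r + 2) * wd0
  + (1 / ((n : ℝ) + n1) ^ 2) * ((5 : ℝ) / 4) ^ (m1 + 1) * ((23 : ℝ) / 18) ^ (m2 + r) *
      ((3 : ℝ) / 2 * T1Bc n1 m1 m2 r + 2 * ((5 : ℝ) / 4) * T2Bc n n1 m1 m2)

def psi1 (n1 m1 m2 r : ℕ) : ℤ :=
  ⌊((m1 : ℝ) * ((n1 : ℝ) - 2) / 2 + (m2 : ℝ) * ((n1 : ℝ) - 3) / 3 + (r : ℝ) * ((n1 : ℝ) - 2) / 2) /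
      ((n1 : ℝ) - 1)⌋

def eta1 (n1 m1 m2 r : ℕ) : ℝ :=
  (m1 : ℝ) * n1 * ((n1 : ℝ) - 2) / 2 + (m2 : ℝ) * n1 * ((n1 : ℝ) - 3) / 3
  + (r : ℝ) * n1 * ((n1 : ℝ) - 2) / 2 - (n1 : ℝ) * ((n1 : ℝ) - 1) * (psi1 n1 m1 m2 r : ℝ)

def zeta1 (n1 m1 m2 r : ℕ) : ℝ := (n1 : ℝ) * ((n1 : ℝ) - 1) - eta1 n1 m1 m2 r

def psi2 (m1 m2 : ℕ) : ℤ := ⌊(m1 : ℝ) / 2 + (m2 : ℝ) / 3⌋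

def eta2 (n n1 m1 m2 : ℕ) : ℝ :=
  (m1 : ℝ) * n * n1 / 2 + (m2 : ℝ) * n * n1 / 3 - (n : ℝ) * n1 * (psi2 m1 m2 : ℝ)

def zeta2 (n n1 m1 m2 : ℕ) : ℝ := (n : ℝ) * n1 - eta2 n n1 m1 m2

def Q1c (n1 m1 m2 r : ℕ) : ℝ :=
  zeta1 n1 m1 m2 r * (psi1 n1 m1 m2 r : ℝ) ^ 2 + eta1 n1 m1 m2 r * ((psi1 n1 m1 m2 r : ℝ) + 1) ^ 2

def Q1pc (n1 m1 m2 r : ℕ) : ℝ :=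
  zeta1 n1 m1 m2 r * ((psi1 n1 m1 m2 r : ℝ) + 1) ^ 2 + eta1 n1 m1 m2 r * ((psi1 n1 m1 m2 r : ℝ) + 2) ^ 2

def Q2c (n n1 m1 m2 : ℕ) : ℝ :=
  zeta2 n n1 m1 m2 * (psi2 m1 m2 : ℝ) ^ 2 + eta2 n n1 m1 m2 * ((psi2 m1 m2 : ℝ) + 1) ^ 2

/-- Lower bound `LBf3` for `E(f_NOD)` of the column augmented design. -/
def LBf3 (n n1 m1 m2 r : ℕ) (ef0 : ℝ) : ℝ :=
  ((m1 : ℝ) + m2) * ((m1 : ℝ) + m2 - 1) / (((m1 : ℝ) + m2 + r) * ((m1 : ℝ) + m2 + r - 1)) * ef0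
  + 1 / (((m1 : ℝ) + m2 + r) * ((m1 : ℝ) + m2 + r - 1)) * (Q1c n1 m1 m2 r + 2 * Q2c n n1 m1 m2)
  + ((n : ℝ) + n1) * ((m1 : ℝ) + m2 + r) / ((m1 : ℝ) + m2 + r - 1)
  - 1 / (((m1 : ℝ) + m2 + r) * ((m1 : ℝ) + m2 + r - 1)) *
    ((n : ℝ) * ((m1 : ℝ) + m2) ^ 2
      - (n : ℝ) ^ 2 * (((m1 : ℝ) + (m1 : ℝ) ^ 2) / 4 + (2 * (m2 : ℝ) + (m2 : ℝ) ^ 2) / 9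
          + (m1 : ℝ) * m2 / 3)
      - (r : ℝ) * m1 * n * ((n : ℝ) - 2)
      - 2 * (r : ℝ) * m2 * n * ((n : ℝ) - 3) / 3
      - (n : ℝ) * ((n : ℝ) - 1) * (r : ℝ) ^ 2
      + (r : ℝ) * ((n : ℝ) ^ 2 + (n1 : ℝ) ^ 2 / 2)
      + ((m1 : ℝ) / 2 + (m2 : ℝ) / 3 + (m1 : ℝ) * ((m1 : ℝ) - 1) / 4
          + ((m2 : ℝ) + r) * ((m2 : ℝ) + r - 1) / 9 + (m1 : ℝ) * ((m2 : ℝ) + r) / 3)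
        * ((n : ℝ) + n1) ^ 2)

/-- Lower bound `LBf3b` for `E(f_NOD)` of the design with one added blocking column. -/
def LBf3b (n n1 m1 m2 r : ℕ) (ef0 : ℝ) : ℝ :=
  ((m1 : ℝ) + m2) * ((m1 : ℝ) + m2 - 1) / (((m1 : ℝ) + m2 + r + 1) * ((m1 : ℝ) + m2 + r)) * ef0
  + 1 / (((m1 : ℝ) + m2 + r + 1) * ((m1 : ℝ) + m2 + r)) * (Q1pc n1 m1 m2 r + 2 * Q2c n n1 m1 m2)
  + ((n : ℝ) + n1) * ((m1 : ℝ) + m2 + r + 1) / ((m1 : ℝ) + m2 + r)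
  - 1 / (((m1 : ℝ) + m2 + r + 1) * ((m1 : ℝ) + m2 + r)) *
    ((n : ℝ) * ((m1 : ℝ) + m2) ^ 2
      - (n : ℝ) ^ 2 * (((m1 : ℝ) + (m1 : ℝ) ^ 2) / 4 + (2 * (m2 : ℝ) + (m2 : ℝ) ^ 2) / 9
          + (m1 : ℝ) * m2 / 3)
      - ((r : ℝ) + 1) * m1 * n * ((n : ℝ) - 2)
      - 2 * ((r : ℝ) + 1) * m2 * n * ((n : ℝ) - 3) / 3
      - (n : ℝ) * ((n : ℝ) - 1) * ((r : ℝ) + 1) ^ 2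
      + (r : ℝ) * ((n : ℝ) ^ 2 + (n1 : ℝ) ^ 2 / 2) + (n : ℝ) ^ 2 + (n1 : ℝ) ^ 2
      + ((m1 : ℝ) / 2 + (m2 : ℝ) / 3 + (m1 : ℝ) * ((m1 : ℝ) + 1) / 4
          + ((m2 : ℝ) + r) * ((m2 : ℝ) + r - 1) / 9 + ((m1 : ℝ) + 1) * ((m2 : ℝ) + r) / 3)
        * ((n : ℝ) + n1) ^ 2)

/-- Lower bound `LBf3B` for `E(f_NOD)` of the design with two added blocking columns. -/
def LBf3B (n n1 m1 m2 r : ℕ) (ef0 : ℝ) : ℝ :=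
  ((m1 : ℝ) + m2) * ((m1 : ℝ) + m2 - 1) / (((m1 : ℝ) + m2 + r + 2) * ((m1 : ℝ) + m2 + r + 1)) * ef0
  + 1 / (((m1 : ℝ) + m2 + r + 2) * ((m1 : ℝ) + m2 + r + 1)) *
      (Q1pc n1 (m1 + 1) m2 r + 2 * Q2c n n1 (m1 + 1) m2)
  + ((n : ℝ) + n1) * ((m1 : ℝ) + m2 + r + 2) / ((m1 : ℝ) + m2 + r + 1)
  - 1 / (((m1 : ℝ) + m2 + r + 2) * ((m1 : ℝ) + m2 + r + 1)) *
    ((n : ℝ) * ((m1 : ℝ) + m2) ^ 2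
      - (n : ℝ) ^ 2 * (((m1 : ℝ) + (m1 : ℝ) ^ 2) / 4 + (2 * (m2 : ℝ) + (m2 : ℝ) ^ 2) / 9
          + (m1 : ℝ) * m2 / 3)
      - ((r : ℝ) + 2) * m1 * n * ((n : ℝ) - 2)
      - 2 * ((r : ℝ) + 2) * m2 * n * ((n : ℝ) - 3) / 3
      - (n : ℝ) * ((n : ℝ) - 1) * ((r : ℝ) + 2) ^ 2
      + ((r : ℝ) + 2) * (n : ℝ) ^ 2 + (3 + (r : ℝ)) * (n1 : ℝ) ^ 2 / 2 + (n : ℝ) * n1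
      + ((m1 : ℝ) / 2 + (m2 : ℝ) / 3 + ((m1 : ℝ) + 2) * ((m1 : ℝ) + 1) / 4
          + ((m2 : ℝ) + r) * ((m2 : ℝ) + r - 1) / 9 + ((m1 : ℝ) + 2) * ((m2 : ℝ) + r) / 3)
        * ((n : ℝ) + n1) ^ 2)



lemma bern_nat_strict (c : ℝ) (hc : 1 < c) : ∀ s : ℕ, 2 ≤ s → 1 + s * (c - 1) < c ^ s := by
  intro s hs
  induction s with
  | zero => omega
  | succ t ih =>
    rcases Nat.lt_or_ge t 2 with ht | ht
    · interval_cases t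
      · omega
      · push_cast; nlinarith
    · have h := ih ht
      have hc0 : (0:ℝ) < c := by linarith
      have ht1 : (1:ℝ) ≤ (t:ℝ) := by exact_mod_cast le_trans (by norm_num) ht
      calc (1:ℝ) + (t+1 : ℕ) * (c-1) ≤ (1 + (t:ℕ) * (c-1)) * c := by
            push_cast
            nlinarith [mul_nonneg (by linarith : (0:ℝ) ≤ (t:ℝ)) (sq_nonneg (c-1))]
        _ < c ^ t * c := by nlinarith
        _ = c ^ (t+1) := by ring

lemma bern_int_le (c : ℝ) (hc : 1 < c) (t : ℤ) : 1 + t * (c - 1) ≤ c ^ t := by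
  have hc0 : (0:ℝ) < c := by linarith
  rcases le_or_gt 0 t with h | h
  · lift t to ℕ using h
    rw [zpow_natCast]
    have := one_add_mul_le_pow (a := c - 1) (by linarith) t
    calc 1 + (t:ℤ) * (c-1) = 1 + (t:ℕ) * (c-1) := by push_cast; ring
      _ ≤ (1 + (c-1)) ^ (t:ℕ) := this
      _ = c ^ (t:ℕ) := by ring_nf
  · obtain ⟨s, rfl⟩ : ∃ s : ℕ, t = -(s:ℤ) := ⟨t.natAbs, by omega⟩
    have hs : 1 ≤ s := by omega
    have hs1 : (1:ℝ) ≤ (s:ℝ) := by exact_mod_cast hs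
    have hinv : (0:ℝ) < c⁻¹ := by positivity
    have hb2 : (1:ℝ) + s * (c⁻¹ - 1) ≤ (c⁻¹) ^ s := by
      have := one_add_mul_le_pow (a := c⁻¹ - 1) (by nlinarith) s
      calc (1:ℝ) + s * (c⁻¹-1) ≤ (1 + (c⁻¹-1)) ^ s := this
        _ = (c⁻¹) ^ s := by ring_nf
    have hcc : c * c⁻¹ = 1 := mul_inv_cancel₀ (by positivity)
    have hstep : 1 + -(s:ℝ) * (c-1) ≤ 1 + (s:ℝ) * (c⁻¹ - 1) := by nlinarith [sq_nonneg (c-1)]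
    rw [zpow_neg, zpow_natCast]
    push_cast
    calc 1 + -(s:ℝ)*(c-1) ≤ 1 + (s:ℝ)*(c⁻¹-1) := hstep
      _ ≤ (c⁻¹)^s := hb2
      _ = (c^s)⁻¹ := by rw [inv_pow]


lemma bern_int_strict (c : ℝ) (hc : 1 < c) (t : ℤ) (h0 : t ≠ 0) (h1 : t ≠ 1) :
    1 + t * (c - 1) < c ^ t := by
  have hc0 : (0:ℝ) < c := by linarith
  rcases le_or_gt 0 t with h | h
  · lift t to ℕ using h
    have ht : 2 ≤ t := by omega
    rw [zpow_natCast]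
    have := bern_nat_strict c hc t ht
    calc 1 + (t:ℤ) * (c-1) = 1 + (t:ℕ) * (c-1) := by push_cast; ring
      _ < c ^ (t:ℕ) := this
  · obtain ⟨s, rfl⟩ : ∃ s : ℕ, t = -(s:ℤ) := ⟨t.natAbs, by omega⟩
    have hs : 1 ≤ s := by omega
    have hs1 : (1:ℝ) ≤ (s:ℝ) := by exact_mod_cast hs
    have hinv : (0:ℝ) < c⁻¹ := by positivity
    have hb2 : (1:ℝ) + s * (c⁻¹ - 1) ≤ (c⁻¹) ^ s := by
      have := one_add_mul_le_pow (a := c⁻¹ - 1) (by nlinarith) s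
      calc (1:ℝ) + s * (c⁻¹-1) ≤ (1 + (c⁻¹-1)) ^ s := this
        _ = (c⁻¹) ^ s := by ring_nf
    have hcc : c * c⁻¹ = 1 := mul_inv_cancel₀ (by positivity)
    have hstep : 1 + -(s:ℝ) * (c-1) < 1 + (s:ℝ) * (c⁻¹ - 1) := by nlinarith [sq_nonneg (c-1)]
    rw [zpow_neg, zpow_natCast]
    push_cast
    calc 1 + -(s:ℝ)*(c-1) < 1 + (s:ℝ)*(c⁻¹-1) := hstep
      _ ≤ (c⁻¹)^s := hb2
      _ = (c^s)⁻¹ := by rw [inv_pow]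


lemma secant_le' (c : ℝ) (hc : 1 < c) (w x : ℤ)
    (h : (1:ℝ) + ((x:ℝ) - w) * (c - 1) ≤ c ^ (x - w)) :
    c ^ w + ((x - w : ℤ) : ℝ) * (c ^ (w+1) - c ^ w) ≤ c ^ x := by
  have hc0 : (0:ℝ) < c := by linarith
  have hw : (0:ℝ) < c ^ w := zpow_pos hc0 w
  have e1 : c ^ (w+1) = c ^ w * c := by rw [zpow_add_one₀ (ne_of_gt hc0)]
  have e2 : c ^ x = c ^ w * c ^ (x - w) := by
    rw [← zpow_add₀ (ne_of_gt hc0)]; ring_nf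
  rw [e1, e2]
  push_cast
  nlinarith [h, hw]

lemma secant_le (c : ℝ) (hc : 1 < c) (w x : ℤ) :
    c ^ w + ((x - w : ℤ) : ℝ) * (c ^ (w+1) - c ^ w) ≤ c ^ x := by
  have := bern_int_le c hc (x - w)
  exact secant_le' c hc w x (by push_cast at this ⊢; linarith)

lemma secant_eq_iff (c : ℝ) (hc : 1 < c) (w x : ℤ) :
    c ^ w + ((x - w : ℤ) : ℝ) * (c ^ (w+1) - c ^ w) = c ^ x ↔ (x = w ∨ x = w + 1) := by
  constructor
  · intro h
    by_contra hx
    push_neg at hx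
    have hst := bern_int_strict c hc (x - w) (by omega) (by omega)
    have hc0 : (0:ℝ) < c := by linarith
    have hw : (0:ℝ) < c ^ w := zpow_pos hc0 w
    have e1 : c ^ (w+1) = c ^ w * c := by rw [zpow_add_one₀ (ne_of_gt hc0)]
    have e2 : c ^ x = c ^ w * c ^ (x - w) := by
      rw [← zpow_add₀ (ne_of_gt hc0)]; ring_nf
    rw [e1, e2] at h
    push_cast at h hst
    nlinarith [hst, hw]
  · rintro (rfl | rfl)
    · simp
    · have hc0 : (0:ℝ) < c := by linarith
      have e1 : c ^ (w+1) = c ^ w * c := by rw [zpow_add_one₀ (ne_of_gt hc0)]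
      rw [e1]; push_cast; ring

lemma sum_secant_aux {α : Type*} (S : Finset α) (f : α → ℤ) (c : ℝ) (w : ℤ) :
    ∑ p ∈ S, (c ^ w + ((f p - w : ℤ) : ℝ) * (c ^ (w+1) - c ^ w))
      = (S.card : ℝ) * c ^ w + (((∑ p ∈ S, f p : ℤ) : ℝ) - (S.card : ℝ) * w) * (c ^ (w+1) - c ^ w) := by
  rw [Finset.sum_add_distrib, Finset.sum_const, ← Finset.sum_mul]
  push_cast
  rw [Finset.sum_sub_distrib, Finset.sum_const]
  push_cast
  ring

lemma sum_secant_le {α : Type*} (S : Finset α) (f : α → ℤ) (c : ℝ) (hc : 1 < c) (w : ℤ) :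
    (S.card : ℝ) * c ^ w + (((∑ p ∈ S, f p : ℤ) : ℝ) - (S.card : ℝ) * w) * (c ^ (w+1) - c ^ w)
      ≤ ∑ p ∈ S, c ^ (f p) := by
  rw [← sum_secant_aux S f c w]
  exact Finset.sum_le_sum (fun p _ => secant_le c hc w (f p))

lemma sum_secant_eq_iff {α : Type*} (S : Finset α) (f : α → ℤ) (c : ℝ) (hc : 1 < c) (w : ℤ) :
    ((S.card : ℝ) * c ^ w + (((∑ p ∈ S, f p : ℤ) : ℝ) - (S.card : ℝ) * w) * (c ^ (w+1) - c ^ w)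
      = ∑ p ∈ S, c ^ (f p)) ↔ ∀ p ∈ S, f p = w ∨ f p = w + 1 := by
  rw [← sum_secant_aux S f c w]
  rw [Finset.sum_eq_sum_iff_of_le (fun p _ => secant_le c hc w (f p))]
  exact forall₂_congr (fun p _ => secant_eq_iff c hc w (f p))

lemma count_w1 {α : Type*} [DecidableEq α] (S : Finset α) (f : α → ℤ) (w : ℤ)
    (h : ∀ p ∈ S, f p = w ∨ f p = w + 1) :
    ((S.filter (fun p => f p = w + 1)).card : ℤ) = (∑ p ∈ S, f p) - S.card * w := by
  have : (∑ p ∈ S, (f p - w)) = ∑ p ∈ S, f p - S.card * w := by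
    rw [Finset.sum_sub_distrib, Finset.sum_const]; push_cast; ring
  rw [← this]
  rw [← Finset.sum_filter_add_sum_filter_not S (fun p => f p = w + 1) (fun p => f p - w)]
  have h1 : ∑ p ∈ S.filter (fun p => f p = w + 1), (f p - w) = (S.filter (fun p => f p = w + 1)).card • (1:ℤ) := by
    rw [← Finset.sum_const]
    exact Finset.sum_congr rfl (fun p hp => by
      have := (Finset.mem_filter.mp hp).2; omega)
  have h2 : ∑ p ∈ S.filter (fun p => ¬ f p = w + 1), (f p - w) = 0 :=
    Finset.sum_eq_zero (fun p hp => by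
      obtain ⟨hpS, hne⟩ := Finset.mem_filter.mp hp
      rcases h p hpS with h' | h' <;> omega)
  rw [h1, h2]; simp

lemma count_w0 {α : Type*} [DecidableEq α] (S : Finset α) (f : α → ℤ) (w : ℤ)
    (h : ∀ p ∈ S, f p = w ∨ f p = w + 1) :
    ((S.filter (fun p => f p = w)).card : ℤ) = S.card - ((∑ p ∈ S, f p) - S.card * w) := by
  have hpart : (S.filter (fun p => f p = w)).card + (S.filter (fun p => f p = w + 1)).card = S.card := by
    have : S.filter (fun p => f p = w) = S.filter (fun p => ¬ f p = w + 1) :=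
      Finset.filter_congr (fun p hp => by rcases h p hp with h' | h' <;> constructor <;> intro <;> omega)
    have hk := Finset.card_filter_add_card_filter_not (s := S) (p := fun p => f p = w + 1)
    rw [this]
    omega
  have := count_w1 S f w h
  omega

lemma pointwise_of_counts {α : Type*} [DecidableEq α] (S : Finset α) (f : α → ℤ) (w : ℤ)
    (h : (S.filter (fun p => f p = w)).card + (S.filter (fun p => f p = w + 1)).card = S.card) :
    ∀ p ∈ S, f p = w ∨ f p = w + 1 := by
  intro p hp
  by_contra hcon
  push_neg at hcon
  set A := S.filter (fun p => f p = w)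
  set B := S.filter (fun p => f p = w + 1)
  have hdisj : Disjoint A B := by
    rw [Finset.disjoint_left]
    intro q hqA hqB
    have h1 := (Finset.mem_filter.mp hqA).2
    have h2 := (Finset.mem_filter.mp hqB).2
    omega
  have hsub : A ∪ B ⊆ S := by
    apply Finset.union_subset <;> exact Finset.filter_subset _ _
  have hcard : (A ∪ B).card = S.card := by
    rw [Finset.card_union_of_disjoint hdisj]; omega
  have hAB : A ∪ B = S := Finset.eq_of_subset_of_card_le hsub (le_of_eq hcard.symm)
  have : p ∈ A ∪ B := hAB ▸ hp
  rcases Finset.mem_union.mp this with h' | h'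
  · exact hcon.1 (Finset.mem_filter.mp h').2
  · exact hcon.2 (Finset.mem_filter.mp h').2

lemma factor_eq (x y : ℕ) (hx : x < 3) (hy : y < 3) :
    (3:ℝ)/2 - |uVal 3 x - uVal 3 y| * (1 - |uVal 3 x - uVal 3 y|)
      = if x = y then (3:ℝ)/2 else 23/18 := by
  interval_cases x <;> interval_cases y <;> norm_num [uVal] <;>
    rw [abs_of_nonneg (by norm_num)] <;> norm_num

lemma prod_ite_pow {s : ℕ} (P : Fin s → Prop) [DecidablePred P] (A B : ℝ) :
    (∏ k : Fin s, if P k then A else B)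
      = A ^ (univ.filter P).card * B ^ (s - (univ.filter P).card) := by
  rw [← Finset.prod_filter_mul_prod_filter_not univ P]
  rw [Finset.prod_congr rfl (fun k hk => if_pos (Finset.mem_filter.mp hk).2),
      Finset.prod_congr rfl (fun k hk => if_neg (Finset.mem_filter.mp hk).2)]
  rw [Finset.prod_const, Finset.prod_const]
  have h := Finset.card_filter_add_card_filter_not (s := (univ : Finset (Fin s))) (p := P)
  have h2 : (univ : Finset (Fin s)).card = s := by simp
  have h3 : (univ.filter (fun k => ¬ P k)).card = s - (univ.filter P).card := by omega
  rw [h3]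

lemma powsplit (v s : ℕ) (hv : v ≤ s) :
    ((3:ℝ)/2) ^ v * ((23:ℝ)/18) ^ (s - v) = ((23:ℝ)/18) ^ s * ((27:ℝ)/23) ^ v := by
  have h1 : ((3:ℝ)/2) ^ v = ((23:ℝ)/18) ^ v * ((27:ℝ)/23) ^ v := by
    rw [← mul_pow]; norm_num
  rw [h1, mul_assoc, mul_comm (((27:ℝ)/23) ^ v), ← mul_assoc, ← pow_add]
  congr 2
  omega

lemma sum_prod_split {β : Type*} [AddCommMonoid β] (n n1 : ℕ) (g : Fin (n + n1) → Fin (n + n1) → β) :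
    ∑ i : Fin (n + n1), ∑ j : Fin (n + n1), g i j
      = (∑ a : Fin n, ∑ b : Fin n, g (Fin.castAdd n1 a) (Fin.castAdd n1 b))
      + (∑ a : Fin n, ∑ b : Fin n1, g (Fin.castAdd n1 a) (Fin.natAdd n b))
      + (∑ a : Fin n1, ∑ b : Fin n, g (Fin.natAdd n a) (Fin.castAdd n1 b))
      + (∑ a : Fin n1, ∑ b : Fin n1, g (Fin.natAdd n a) (Fin.natAdd n b)) := by
  rw [Fin.sum_univ_add (f := fun i => ∑ j : Fin (n + n1), g i j)]
  rw [Finset.sum_congr rfl (fun a _ => Fin.sum_univ_add (f := fun j => g (Fin.castAdd n1 a) j)),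
      Finset.sum_congr rfl (fun a _ => Fin.sum_univ_add (f := fun j => g (Fin.natAdd n a) j))]
  rw [Finset.sum_add_distrib, Finset.sum_add_distrib]
  abel

lemma card_filter_eq_sum {s : ℕ} (P : Fin s → Prop) [DecidablePred P] :
    ((univ.filter P).card : ℕ) = ∑ k : Fin s, if P k then 1 else 0 :=
  Finset.card_filter P univ

-- counting: pairs within one balanced column
lemma cnt_full {s : ℕ} (d : Fin s → ℕ) (L : ℕ)
    (h : ∀ a, L * (univ.filter (fun b => d b = d a)).card = s) :
    L * (univ.filter (fun p : Fin s × Fin s => d p.1 = d p.2)).card = s * s := by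
  rw [Finset.card_filter]
  rw [Fintype.sum_prod_type]
  have inner : ∀ a : Fin s, (∑ b : Fin s, if d a = d b then 1 else 0)
      = (univ.filter (fun b => d b = d a)).card := by
    intro a
    rw [Finset.card_filter]
    exact Finset.sum_congr rfl (fun b _ => by by_cases hb : d a = d b <;> simp [hb, eq_comm])
  rw [Finset.sum_congr rfl (fun a _ => inner a), Finset.mul_sum]
  rw [Finset.sum_congr rfl (fun a _ => h a)]
  simp [mul_comm]

lemma cnt_diag {s : ℕ} (d : Fin s → ℕ) :
    (univ.filter (fun p : Fin s × Fin s => d p.1 = d p.2 ∧ p.1 = p.2)).card = s := by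
  have : (univ.filter (fun p : Fin s × Fin s => d p.1 = d p.2 ∧ p.1 = p.2))
      = univ.filter (fun p : Fin s × Fin s => p.1 = p.2) := by
    apply Finset.filter_congr
    intro p _
    constructor
    · exact fun h => h.2
    · intro h; exact ⟨by rw [h], h⟩
  rw [this, Finset.card_filter, Fintype.sum_prod_type]
  have : ∀ a : Fin s, (∑ b : Fin s, if a = b then 1 else 0) = 1 := by
    intro a; simp [Finset.sum_ite_eq]
  rw [Finset.sum_congr rfl (fun a _ => this a)]
  simp

lemma cnt_pairs {s : ℕ} (d : Fin s → ℕ) (L : ℕ)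
    (h : ∀ a, L * (univ.filter (fun b => d b = d a)).card = s) :
    L * (univ.filter (fun p : Fin s × Fin s => p.1 ≠ p.2 ∧ d p.1 = d p.2)).card + L * s = s * s := by
  have hsplit := Finset.card_filter_add_card_filter_not
    (s := univ.filter (fun p : Fin s × Fin s => d p.1 = d p.2)) (p := fun p => p.1 = p.2)
  rw [Finset.filter_filter, Finset.filter_filter] at hsplit
  have h1 : (univ.filter (fun p : Fin s × Fin s => d p.1 = d p.2 ∧ p.1 = p.2)).card = s := cnt_diag d
  have h2 : (univ.filter (fun p : Fin s × Fin s => p.1 ≠ p.2 ∧ d p.1 = d p.2))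
      = univ.filter (fun p : Fin s × Fin s => d p.1 = d p.2 ∧ ¬ p.1 = p.2) := by
    apply Finset.filter_congr; intro p _; tauto
  have h3 := cnt_full d L h
  rw [h2, ← h3]
  have : L * #(Finset.filter (fun p : Fin s × Fin s => d p.1 = d p.2 ∧ ¬p.1 = p.2) univ) + L * s
      = L * (#(Finset.filter (fun p : Fin s × Fin s => d p.1 = d p.2 ∧ ¬p.1 = p.2) univ) + s) := by ring
  rw [this]
  congr 1
  omega

lemma cnt_cross {n n1 : ℕ} (d : Fin n → ℕ) (e : Fin n1 → ℕ) (L : ℕ)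
    (h : ∀ a : Fin n, L * (univ.filter (fun b => e b = d a)).card = n1) :
    L * (univ.filter (fun p : Fin n × Fin n1 => d p.1 = e p.2)).card = n * n1 := by
  rw [Finset.card_filter, Fintype.sum_prod_type]
  have inner : ∀ a : Fin n, (∑ b : Fin n1, if d a = e b then 1 else 0)
      = (univ.filter (fun b => e b = d a)).card := by
    intro a
    rw [Finset.card_filter]
    exact Finset.sum_congr rfl (fun b _ => by by_cases hb : d a = e b <;> simp [hb, eq_comm])
  rw [Finset.sum_congr rfl (fun a _ => inner a), Finset.mul_sum]
  rw [Finset.sum_congr rfl (fun a _ => h a)]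
  simp [mul_comm]

lemma bridge_follow (n n1 : ℕ) (Q : Fin (n + n1) × Fin (n + n1) → Prop) [DecidablePred Q] :
    (univ.filter (fun p : Fin (n + n1) × Fin (n + n1) =>
        n ≤ (p.1 : ℕ) ∧ n ≤ (p.2 : ℕ) ∧ Q p)).card
      = (univ.filter (fun p : Fin n1 × Fin n1 =>
          Q (Fin.natAdd n p.1, Fin.natAdd n p.2))).card := by
  rw [Finset.card_filter, Finset.card_filter, Fintype.sum_prod_type, Fintype.sum_prod_type]
  rw [Fin.sum_univ_add (f := fun i => ∑ j : Fin (n+n1), if n ≤ (i:ℕ) ∧ n ≤ (j:ℕ) ∧ Q (i, j) then 1 else 0)]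
  have hcast : ∀ a : Fin n,
      (∑ j : Fin (n+n1), if n ≤ ((Fin.castAdd n1 a :Fin (n+n1)):ℕ) ∧ n ≤ (j:ℕ) ∧ Q (Fin.castAdd n1 a, j) then 1 else 0) = 0 := by
    intro a
    apply Finset.sum_eq_zero
    intro j _
    rw [if_neg]
    intro hcon
    exact absurd hcon.1 (by simp)
  rw [Finset.sum_congr rfl (fun a _ => hcast a), Finset.sum_const, smul_zero, zero_add]
  apply Finset.sum_congr rfl
  intro a _
  rw [Fin.sum_univ_add (f := fun j => if n ≤ ((Fin.natAdd n a : Fin (n+n1)):ℕ) ∧ n ≤ (j:ℕ) ∧ Q (Fin.natAdd n a, j) then 1 else 0)]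
  have hcast2 : (∑ j : Fin n, if n ≤ ((Fin.natAdd n a : Fin (n+n1)):ℕ) ∧ n ≤ ((Fin.castAdd n1 j : Fin (n+n1)):ℕ) ∧ Q (Fin.natAdd n a, Fin.castAdd n1 j) then 1 else 0) = 0 := by
    apply Finset.sum_eq_zero
    intro j _
    rw [if_neg]
    intro hcon
    exact absurd hcon.2.1 (by simp)
  rw [hcast2, zero_add]
  apply Finset.sum_congr rfl
  intro b _
  congr 1
  simp only [eq_iff_iff]
  constructor
  · exact fun h => h.2.2
  · intro h
    exact ⟨by simp [Fin.natAdd], by simp [Fin.natAdd], h⟩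

lemma bridge_cross (n n1 : ℕ) (Q : Fin (n + n1) × Fin (n + n1) → Prop) [DecidablePred Q] :
    (univ.filter (fun p : Fin (n + n1) × Fin (n + n1) =>
        (p.1 : ℕ) < n ∧ n ≤ (p.2 : ℕ) ∧ Q p)).card
      = (univ.filter (fun p : Fin n × Fin n1 =>
          Q (Fin.castAdd n1 p.1, Fin.natAdd n p.2))).card := by
  rw [Finset.card_filter, Finset.card_filter, Fintype.sum_prod_type, Fintype.sum_prod_type]
  rw [Fin.sum_univ_add (f := fun i => ∑ j : Fin (n+n1), if (i:ℕ) < n ∧ n ≤ (j:ℕ) ∧ Q (i, j) then 1 else 0)]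
  have hnat : ∀ a : Fin n1,
      (∑ j : Fin (n+n1), if ((Fin.natAdd n a : Fin (n+n1)):ℕ) < n ∧ n ≤ (j:ℕ) ∧ Q (Fin.natAdd n a, j) then 1 else 0) = 0 := by
    intro a
    apply Finset.sum_eq_zero
    intro j _
    rw [if_neg]
    intro hcon
    exact absurd hcon.1 (by simp)
  rw [Finset.sum_congr rfl (fun a _ => hnat a), Finset.sum_const, smul_zero, add_zero]
  apply Finset.sum_congr rfl
  intro a _
  rw [Fin.sum_univ_add (f := fun j => if ((Fin.castAdd n1 a : Fin (n+n1)):ℕ) < n ∧ n ≤ (j:ℕ) ∧ Q (Fin.castAdd n1 a, j) then 1 else 0)]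
  have hcast2 : (∑ j : Fin n, if ((Fin.castAdd n1 a : Fin (n+n1)):ℕ) < n ∧ n ≤ ((Fin.castAdd n1 j : Fin (n+n1)):ℕ) ∧ Q (Fin.castAdd n1 a, Fin.castAdd n1 j) then 1 else 0) = 0 := by
    apply Finset.sum_eq_zero
    intro j _
    rw [if_neg]
    intro hcon
    exact absurd hcon.2.1 (by simp)
  rw [hcast2, zero_add]
  apply Finset.sum_congr rfl
  intro b _
  congr 1
  simp only [eq_iff_iff]
  constructor
  · exact fun h => h.2.2
  · intro h
    exact ⟨by simp [Fin.castAdd], by simp [Fin.natAdd], h⟩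

variable {n n1 m r : ℕ} {d0 : Fin n → Fin m → ℕ} {d1 : Fin n1 → Fin m → ℕ} {d2 : Fin n1 → Fin r → ℕ}

lemma aug_cc (a : Fin n) (k : Fin m) :
    augDesign n n1 m r d0 d1 d2 (Fin.castAdd n1 a) (Fin.castAdd r k) = d0 a k := by
  simp [augDesign, Fin.castAdd, Fin.natAdd, a.isLt, k.isLt, Fin.castLE]

lemma aug_cn (a : Fin n) (k : Fin r) :
    augDesign n n1 m r d0 d1 d2 (Fin.castAdd n1 a) (Fin.natAdd m k) = 0 := by
  simp [augDesign, Fin.castAdd, Fin.natAdd, a.isLt]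

lemma aug_nc (a : Fin n1) (k : Fin m) :
    augDesign n n1 m r d0 d1 d2 (Fin.natAdd n a) (Fin.castAdd r k) = d1 a k := by
  simp [augDesign, Fin.castAdd, Fin.natAdd, k.isLt]

lemma aug_nn (a : Fin n1) (k : Fin r) :
    augDesign n n1 m r d0 d1 d2 (Fin.natAdd n a) (Fin.natAdd m k) = d2 a k := by
  simp [augDesign, Fin.castAdd, Fin.natAdd]

lemma qfun_eq3 (m2 r : ℕ) (k : Fin (0 + m2 + r)) : qfun 0 m2 r (k : ℕ) = 3 := by
  have := k.isLt
  unfold qfun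
  rw [if_neg (by omega), if_pos (by omega)]

lemma qfun_eq3' (m2 : ℕ) (k : Fin (0 + m2)) : qfun 0 m2 0 (k : ℕ) = 3 := by
  have := k.isLt
  unfold qfun
  rw [if_neg (by omega), if_pos (by omega)]

lemma card_filter_le_fin {s : ℕ} (P : Fin s → Prop) [DecidablePred P] :
    (univ.filter P).card ≤ s := by
  simpa using Finset.card_filter_le univ P

lemma prod_two_pows (v t s u : ℕ) (hv : v ≤ s) (ht : t ≤ u) :
    ((3:ℝ)/2) ^ v * ((23:ℝ)/18) ^ (s - v) * (((3:ℝ)/2) ^ t * ((23:ℝ)/18) ^ (u - t))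
      = ((23:ℝ)/18) ^ (s + u) * ((27:ℝ)/23) ^ (v + t) := by
  rw [powsplit v s hv, powsplit t u ht, pow_add, pow_add]
  ring

section prods
variable {n n1 m2 r : ℕ} (d0 : Fin n → Fin (0+m2) → ℕ) (d1 : Fin n1 → Fin (0+m2) → ℕ)
  (d2 : Fin n1 → Fin r → ℕ)

local notation "D" => augDesign n n1 (0+m2) r d0 d1 d2
local notation "Q" => qfun 0 m2 r

lemma prod_ff (h1 : ∀ i k, d1 i k < 3) (h2 : ∀ i k, d2 i k = 1 ∨ d2 i k = 2) (a b : Fin n1) :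
    (∏ k : Fin (0+m2+r), ((3:ℝ)/2
        - |uVal (Q (k:ℕ)) (D (Fin.natAdd n a) k) - uVal (Q (k:ℕ)) (D (Fin.natAdd n b) k)|
          * (1 - |uVal (Q (k:ℕ)) (D (Fin.natAdd n a) k) - uVal (Q (k:ℕ)) (D (Fin.natAdd n b) k)|)))
      = ((23:ℝ)/18)^(0+m2+r) * ((27:ℝ)/23)^((univ.filter (fun k : Fin (0+m2) => d1 a k = d1 b k)).card
          + (univ.filter (fun k : Fin r => d2 a k = d2 b k)).card) := by
  rw [Fin.prod_univ_add]
  have e1 : ∀ k : Fin (0+m2),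
      ((3:ℝ)/2 - |uVal (Q ((Fin.castAdd r k : Fin (0+m2+r)):ℕ)) (D (Fin.natAdd n a) (Fin.castAdd r k))
          - uVal (Q ((Fin.castAdd r k : Fin (0+m2+r)):ℕ)) (D (Fin.natAdd n b) (Fin.castAdd r k))|
        * (1 - |uVal (Q ((Fin.castAdd r k : Fin (0+m2+r)):ℕ)) (D (Fin.natAdd n a) (Fin.castAdd r k))
          - uVal (Q ((Fin.castAdd r k : Fin (0+m2+r)):ℕ)) (D (Fin.natAdd n b) (Fin.castAdd r k))|))
      = (if d1 a k = d1 b k then (3:ℝ)/2 else 23/18) := by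
    intro k
    rw [qfun_eq3, aug_nc, aug_nc]
    exact factor_eq _ _ (h1 a k) (h1 b k)
  have e2 : ∀ k : Fin r,
      ((3:ℝ)/2 - |uVal (Q ((Fin.natAdd (0+m2) k : Fin (0+m2+r)):ℕ)) (D (Fin.natAdd n a) (Fin.natAdd (0+m2) k))
          - uVal (Q ((Fin.natAdd (0+m2) k : Fin (0+m2+r)):ℕ)) (D (Fin.natAdd n b) (Fin.natAdd (0+m2) k))|
        * (1 - |uVal (Q ((Fin.natAdd (0+m2) k : Fin (0+m2+r)):ℕ)) (D (Fin.natAdd n a) (Fin.natAdd (0+m2) k))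
          - uVal (Q ((Fin.natAdd (0+m2) k : Fin (0+m2+r)):ℕ)) (D (Fin.natAdd n b) (Fin.natAdd (0+m2) k))|))
      = (if d2 a k = d2 b k then (3:ℝ)/2 else 23/18) := by
    intro k
    rw [qfun_eq3, aug_nn, aug_nn]
    refine factor_eq _ _ ?_ ?_
    · rcases h2 a k with h | h <;> omega
    · rcases h2 b k with h | h <;> omega
  rw [Finset.prod_congr rfl (fun k _ => e1 k), Finset.prod_congr rfl (fun k _ => e2 k)]
  rw [prod_ite_pow, prod_ite_pow]
  rw [prod_two_pows _ _ _ _ (card_filter_le_fin _) (card_filter_le_fin _)]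

lemma prod_if (h0 : ∀ i k, d0 i k < 3) (h1 : ∀ i k, d1 i k < 3)
    (h2 : ∀ i k, d2 i k = 1 ∨ d2 i k = 2) (a : Fin n) (b : Fin n1) :
    (∏ k : Fin (0+m2+r), ((3:ℝ)/2
        - |uVal (Q (k:ℕ)) (D (Fin.castAdd n1 a) k) - uVal (Q (k:ℕ)) (D (Fin.natAdd n b) k)|
          * (1 - |uVal (Q (k:ℕ)) (D (Fin.castAdd n1 a) k) - uVal (Q (k:ℕ)) (D (Fin.natAdd n b) k)|)))
      = ((23:ℝ)/18)^(0+m2+r) * ((27:ℝ)/23)^((univ.filter (fun k : Fin (0+m2) => d0 a k = d1 b k)).card) := by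
  rw [Fin.prod_univ_add]
  have e1 : ∀ k : Fin (0+m2),
      ((3:ℝ)/2 - |uVal (Q ((Fin.castAdd r k : Fin (0+m2+r)):ℕ)) (D (Fin.castAdd n1 a) (Fin.castAdd r k))
          - uVal (Q ((Fin.castAdd r k : Fin (0+m2+r)):ℕ)) (D (Fin.natAdd n b) (Fin.castAdd r k))|
        * (1 - |uVal (Q ((Fin.castAdd r k : Fin (0+m2+r)):ℕ)) (D (Fin.castAdd n1 a) (Fin.castAdd r k))
          - uVal (Q ((Fin.castAdd r k : Fin (0+m2+r)):ℕ)) (D (Fin.natAdd n b) (Fin.castAdd r k))|))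
      = (if d0 a k = d1 b k then (3:ℝ)/2 else 23/18) := by
    intro k
    rw [qfun_eq3, aug_cc, aug_nc]
    exact factor_eq _ _ (h0 a k) (h1 b k)
  have e2 : ∀ k : Fin r,
      ((3:ℝ)/2 - |uVal (Q ((Fin.natAdd (0+m2) k : Fin (0+m2+r)):ℕ)) (D (Fin.castAdd n1 a) (Fin.natAdd (0+m2) k))
          - uVal (Q ((Fin.natAdd (0+m2) k : Fin (0+m2+r)):ℕ)) (D (Fin.natAdd n b) (Fin.natAdd (0+m2) k))|
        * (1 - |uVal (Q ((Fin.natAdd (0+m2) k : Fin (0+m2+r)):ℕ)) (D (Fin.castAdd n1 a) (Fin.natAdd (0+m2) k))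
          - uVal (Q ((Fin.natAdd (0+m2) k : Fin (0+m2+r)):ℕ)) (D (Fin.natAdd n b) (Fin.natAdd (0+m2) k))|))
      = ((23:ℝ)/18) := by
    intro k
    rw [qfun_eq3, aug_cn, aug_nn]
    have hb := factor_eq 0 (d2 b k) (by omega) (by rcases h2 b k with h | h <;> omega)
    rw [hb, if_neg (by rcases h2 b k with h | h <;> omega)]
  rw [Finset.prod_congr rfl (fun k _ => e1 k), Finset.prod_congr rfl (fun k _ => e2 k)]
  rw [prod_ite_pow, Finset.prod_const, Finset.card_univ, Fintype.card_fin]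
  rw [powsplit _ _ (card_filter_le_fin _)]
  rw [pow_add]
  ring

lemma prod_fi (h0 : ∀ i k, d0 i k < 3) (h1 : ∀ i k, d1 i k < 3)
    (h2 : ∀ i k, d2 i k = 1 ∨ d2 i k = 2) (a : Fin n1) (b : Fin n) :
    (∏ k : Fin (0+m2+r), ((3:ℝ)/2
        - |uVal (Q (k:ℕ)) (D (Fin.natAdd n a) k) - uVal (Q (k:ℕ)) (D (Fin.castAdd n1 b) k)|
          * (1 - |uVal (Q (k:ℕ)) (D (Fin.natAdd n a) k) - uVal (Q (k:ℕ)) (D (Fin.castAdd n1 b) k)|)))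
      = ((23:ℝ)/18)^(0+m2+r) * ((27:ℝ)/23)^((univ.filter (fun k : Fin (0+m2) => d0 b k = d1 a k)).card) := by
  have sym : ∀ k : Fin (0+m2+r),
      ((3:ℝ)/2 - |uVal (Q (k:ℕ)) (D (Fin.natAdd n a) k) - uVal (Q (k:ℕ)) (D (Fin.castAdd n1 b) k)|
          * (1 - |uVal (Q (k:ℕ)) (D (Fin.natAdd n a) k) - uVal (Q (k:ℕ)) (D (Fin.castAdd n1 b) k)|))
      = ((3:ℝ)/2 - |uVal (Q (k:ℕ)) (D (Fin.castAdd n1 b) k) - uVal (Q (k:ℕ)) (D (Fin.natAdd n a) k)|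
          * (1 - |uVal (Q (k:ℕ)) (D (Fin.castAdd n1 b) k) - uVal (Q (k:ℕ)) (D (Fin.natAdd n a) k)|)) := by
    intro k
    rw [abs_sub_comm]
  rw [Finset.prod_congr rfl (fun k _ => sym k)]
  exact prod_if d0 d1 d2 h0 h1 h2 b a

lemma prod_ii (a b : Fin n) :
    (∏ k : Fin (0+m2+r), ((3:ℝ)/2
        - |uVal (Q (k:ℕ)) (D (Fin.castAdd n1 a) k) - uVal (Q (k:ℕ)) (D (Fin.castAdd n1 b) k)|
          * (1 - |uVal (Q (k:ℕ)) (D (Fin.castAdd n1 a) k) - uVal (Q (k:ℕ)) (D (Fin.castAdd n1 b) k)|)))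
      = ((3:ℝ)/2)^r * (∏ k : Fin (0+m2), ((3:ℝ)/2
        - |uVal (qfun 0 m2 0 (k:ℕ)) (d0 a k) - uVal (qfun 0 m2 0 (k:ℕ)) (d0 b k)|
          * (1 - |uVal (qfun 0 m2 0 (k:ℕ)) (d0 a k) - uVal (qfun 0 m2 0 (k:ℕ)) (d0 b k)|))) := by
  rw [Fin.prod_univ_add]
  have e1 : ∀ k : Fin (0+m2),
      ((3:ℝ)/2 - |uVal (Q ((Fin.castAdd r k : Fin (0+m2+r)):ℕ)) (D (Fin.castAdd n1 a) (Fin.castAdd r k))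
          - uVal (Q ((Fin.castAdd r k : Fin (0+m2+r)):ℕ)) (D (Fin.castAdd n1 b) (Fin.castAdd r k))|
        * (1 - |uVal (Q ((Fin.castAdd r k : Fin (0+m2+r)):ℕ)) (D (Fin.castAdd n1 a) (Fin.castAdd r k))
          - uVal (Q ((Fin.castAdd r k : Fin (0+m2+r)):ℕ)) (D (Fin.castAdd n1 b) (Fin.castAdd r k))|))
      = ((3:ℝ)/2 - |uVal (qfun 0 m2 0 (k:ℕ)) (d0 a k) - uVal (qfun 0 m2 0 (k:ℕ)) (d0 b k)|
          * (1 - |uVal (qfun 0 m2 0 (k:ℕ)) (d0 a k) - uVal (qfun 0 m2 0 (k:ℕ)) (d0 b k)|)) := by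
    intro k
    rw [qfun_eq3, qfun_eq3', aug_cc, aug_cc]
  have e2 : ∀ k : Fin r,
      ((3:ℝ)/2 - |uVal (Q ((Fin.natAdd (0+m2) k : Fin (0+m2+r)):ℕ)) (D (Fin.castAdd n1 a) (Fin.natAdd (0+m2) k))
          - uVal (Q ((Fin.natAdd (0+m2) k : Fin (0+m2+r)):ℕ)) (D (Fin.castAdd n1 b) (Fin.natAdd (0+m2) k))|
        * (1 - |uVal (Q ((Fin.natAdd (0+m2) k : Fin (0+m2+r)):ℕ)) (D (Fin.castAdd n1 a) (Fin.natAdd (0+m2) k))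
          - uVal (Q ((Fin.natAdd (0+m2) k : Fin (0+m2+r)):ℕ)) (D (Fin.castAdd n1 b) (Fin.natAdd (0+m2) k))|))
      = ((3:ℝ)/2) := by
    intro k
    rw [qfun_eq3, aug_cn, aug_cn]
    have hb := factor_eq 0 0 (by omega) (by omega)
    rw [hb, if_pos rfl]
  rw [Finset.prod_congr rfl (fun k _ => e1 k), Finset.prod_congr rfl (fun k _ => e2 k)]
  rw [Finset.prod_const, Finset.card_univ, Fintype.card_fin]
  ring
end prods

section evals
variable {n n1 m2 r : ℕ} (d0 : Fin n → Fin (0+m2) → ℕ) (d1 : Fin n1 → Fin (0+m2) → ℕ)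
  (d2 : Fin n1 → Fin r → ℕ)

local notation "D" => augDesign n n1 (0+m2) r d0 d1 d2

lemma Vco_gen (i j : Fin (n + n1)) (e e' : Fin (0+m2) → ℕ)
    (he : ∀ k : Fin (0+m2), D i (Fin.castAdd r k) = e k)
    (he' : ∀ k : Fin (0+m2), D j (Fin.castAdd r k) = e' k) :
    Vco 0 m2 D i j = (univ.filter (fun k : Fin (0+m2) => e k = e' k)).card := by
  unfold Vco
  rw [Finset.card_filter, Finset.card_filter]
  rw [Fin.sum_univ_add (f := fun k : Fin ((0+m2)+r) => if 0 ≤ (k:ℕ) ∧ (k:ℕ) < 0 + m2 ∧ D i k = D j k then 1 else 0)]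
  have e2 : ∀ k : Fin r,
      (if 0 ≤ ((Fin.natAdd (0+m2) k : Fin ((0+m2)+r)):ℕ) ∧ ((Fin.natAdd (0+m2) k : Fin ((0+m2)+r)):ℕ) < 0 + m2
          ∧ D i (Fin.natAdd (0+m2) k) = D j (Fin.natAdd (0+m2) k) then 1 else 0) = 0 := by
    intro k
    rw [if_neg]
    intro hcon
    have h := hcon.2.1
    rw [Fin.coe_natAdd] at h
    omega
  rw [Finset.sum_congr rfl (fun k _ => e2 k), Finset.sum_const, smul_zero, add_zero]
  apply Finset.sum_congr rfl
  intro k _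
  rw [he k, he' k]
  have hlt : ((Fin.castAdd r k : Fin ((0+m2)+r)):ℕ) < 0 + m2 := by
    simpa [Fin.castAdd] using k.isLt
  by_cases h : e k = e' k
  · rw [if_pos ⟨Nat.zero_le _, hlt, h⟩, if_pos h]
  · rw [if_neg (by tauto), if_neg h]

lemma Vco_ff (a b : Fin n1) :
    Vco 0 m2 D (Fin.natAdd n a) (Fin.natAdd n b)
      = (univ.filter (fun k : Fin (0+m2) => d1 a k = d1 b k)).card :=
  Vco_gen d0 d1 d2 _ _ _ _ (fun k => aug_nc a k) (fun k => aug_nc b k)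

lemma Vco_if (a : Fin n) (b : Fin n1) :
    Vco 0 m2 D (Fin.castAdd n1 a) (Fin.natAdd n b)
      = (univ.filter (fun k : Fin (0+m2) => d0 a k = d1 b k)).card :=
  Vco_gen d0 d1 d2 _ _ _ _ (fun k => aug_cc a k) (fun k => aug_nc b k)

lemma Tco_ff (h2 : ∀ i k, d2 i k = 1 ∨ d2 i k = 2) (a b : Fin n1) :
    Tco (0+m2) D (Fin.natAdd n a) (Fin.natAdd n b)
      = (univ.filter (fun k : Fin r => d2 a k = d2 b k)).card := by
  unfold Tco
  rw [Finset.card_filter, Finset.card_filter]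
  rw [Fin.sum_univ_add (f := fun k : Fin ((0+m2)+r) => if (0+m2) ≤ (k:ℕ)
      ∧ D (Fin.natAdd n a) k = D (Fin.natAdd n b) k
      ∧ (D (Fin.natAdd n a) k = 1 ∨ D (Fin.natAdd n a) k = 2) then 1 else 0)]
  have e1 : ∀ k : Fin (0+m2),
      (if (0+m2) ≤ ((Fin.castAdd r k : Fin ((0+m2)+r)):ℕ)
        ∧ D (Fin.natAdd n a) (Fin.castAdd r k) = D (Fin.natAdd n b) (Fin.castAdd r k)
        ∧ (D (Fin.natAdd n a) (Fin.castAdd r k) = 1 ∨ D (Fin.natAdd n a) (Fin.castAdd r k) = 2)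
        then 1 else 0) = 0 := by
    intro k
    rw [if_neg]
    intro hcon
    have h := hcon.1
    rw [Fin.coe_castAdd] at h
    have := k.isLt
    omega
  rw [Finset.sum_congr rfl (fun k _ => e1 k), Finset.sum_const, smul_zero, zero_add]
  apply Finset.sum_congr rfl
  intro k _
  rw [aug_nn a k, aug_nn b k]
  have hge : (0+m2) ≤ ((Fin.natAdd (0+m2) k : Fin ((0+m2)+r)):ℕ) := by
    simp [Fin.natAdd]
  by_cases h : d2 a k = d2 b k
  · rw [if_pos ⟨hge, h, h2 a k⟩, if_pos h]
  · rw [if_neg (by tauto), if_neg h]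
end evals

lemma sum_card_swap {β : Type*} (S : Finset β) {s : ℕ} (g : β → Fin s → Prop)
    [∀ p k, Decidable (g p k)] :
    (∑ p ∈ S, (univ.filter (fun k => g p k)).card) = ∑ k : Fin s, (S.filter (fun p => g p k)).card := by
  simp only [Finset.card_filter]
  rw [Finset.sum_comm]

lemma WD_sum {N M : ℕ} (q : Fin M → ℕ) (x : Fin N → Fin M → ℕ) (hN : N ≠ 0) :
    ∑ i : Fin N, ∑ j : Fin N, ∏ k : Fin M, ((3:ℝ)/2
        - |uVal (q k) (x i k) - uVal (q k) (x j k)| * (1 - |uVal (q k) (x i k) - uVal (q k) (x j k)|))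
      = (N:ℝ)^2 * (WD q x + ((4:ℝ)/3)^M) := by
  have hN' : (N:ℝ) ≠ 0 := Nat.cast_ne_zero.mpr hN
  unfold WD
  field_simp
  ring

lemma sum_diag_split {s : ℕ} (h : Fin s × Fin s → ℝ) :
    (∑ p : Fin s × Fin s, h p)
      = (∑ p ∈ univ.filter (fun p : Fin s × Fin s => p.1 ≠ p.2), h p) + ∑ a : Fin s, h (a, a) := by
  rw [← Finset.sum_filter_add_sum_filter_not univ (fun p : Fin s × Fin s => p.1 ≠ p.2) h]
  congr 1
  rw [Finset.sum_filter, Fintype.sum_prod_type]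
  have : ∀ a : Fin s, (∑ b : Fin s, if ¬ (a ≠ b) then h (a, b) else 0) = h (a, a) := by
    intro a
    simp [not_not]
  rw [Finset.sum_congr rfl (fun a _ => this a)]

lemma card_ne_pairs (s : ℕ) :
    (univ.filter (fun p : Fin s × Fin s => p.1 ≠ p.2)).card + s = s * s := by
  have h := Finset.card_filter_add_card_filter_not
    (s := (univ : Finset (Fin s × Fin s))) (p := fun p => p.1 ≠ p.2)
  have hd : (univ.filter (fun p : Fin s × Fin s => ¬ p.1 ≠ p.2)).card = s := by
    have e : (univ.filter (fun p : Fin s × Fin s => ¬ p.1 ≠ p.2))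
        = univ.filter (fun p : Fin s × Fin s => (fun _ : Fin s => 0) p.1 = (fun _ => 0) p.2 ∧ p.1 = p.2) := by
      apply Finset.filter_congr; intro p _; simp
    rw [e]
    exact cnt_diag (fun _ => 0)
  have hu : (univ : Finset (Fin s × Fin s)).card = s * s := by simp
  omega

lemma natAdd_inj_iff (n n1 : ℕ) (a b : Fin n1) :
    (Fin.natAdd n a ≠ Fin.natAdd n b) ↔ a ≠ b := by
  constructor
  · intro h hab; exact h (by rw [hab])
  · intro h hc
    apply h
    have := congrArg (fun x : Fin (n + n1) => (x : ℕ)) hc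
    simp only [Fin.coe_natAdd] at this
    exact Fin.ext (by omega)

set_option maxHeartbeats 1000000 in
theorem paper_stmt_2 (n n1 m1 m2 r : ℕ) (hn : 1 ≤ n) (hn1 : 2 ≤ n1)
    (hm : 1 ≤ m2) (hm1 : m1 = 0)
    (d0 : Fin n → Fin (m1 + m2) → ℕ) (d1 : Fin n1 → Fin (m1 + m2) → ℕ)
    (d2 : Fin n1 → Fin r → ℕ)
    (hd0 : IsUType n m1 m2 d0) (hd1 : IsUType n1 m1 m2 d1) (hd2 : IsBalanced n1 r d2) :
    WD (fun k : Fin (m1 + m2 + r) => qfun m1 m2 r (k : ℕ)) (augDesign n n1 (m1 + m2) r d0 d1 d2) ≥ LBW33 n n1 m2 r (WD (fun k : Fin (m1 + m2) => qfun m1 m2 0 (k : ℕ)) d0) ∧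
    (WD (fun k : Fin (m1 + m2 + r) => qfun m1 m2 r (k : ℕ)) (augDesign n n1 (m1 + m2) r d0 d1 d2) = LBW33 n n1 m2 r (WD (fun k : Fin (m1 + m2) => qfun m1 m2 0 (k : ℕ)) d0) ↔
      ((((univ.filter (fun p : Fin (n + n1) × Fin (n + n1) =>
            n ≤ (p.1 : ℕ) ∧ n ≤ (p.2 : ℕ) ∧ p.1 ≠ p.2 ∧
            ((Vco m1 m2 (augDesign n n1 (m1 + m2) r d0 d1 d2) p.1 p.2 + Tco (m1 + m2) (augDesign n n1 (m1 + m2) r d0 d1 d2) p.1 p.2 : ℕ) : ℤ) = w2 n1 m2 r)).card : ℝ)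
          = p2c n1 m2 r ∧
        ((univ.filter (fun p : Fin (n + n1) × Fin (n + n1) =>
            n ≤ (p.1 : ℕ) ∧ n ≤ (p.2 : ℕ) ∧ p.1 ≠ p.2 ∧
            ((Vco m1 m2 (augDesign n n1 (m1 + m2) r d0 d1 d2) p.1 p.2 + Tco (m1 + m2) (augDesign n n1 (m1 + m2) r d0 d1 d2) p.1 p.2 : ℕ) : ℤ) = w2 n1 m2 r + 1)).card : ℝ)
          = q2c n1 m2 r) ∧
       (((univ.filter (fun p : Fin (n + n1) × Fin (n + n1) =>
            (p.1 : ℕ) < n ∧ n ≤ (p.2 : ℕ) ∧ Vco m1 m2 (augDesign n n1 (m1 + m2) r d0 d1 d2) p.1 p.2 = w3 m2)).card : ℝ)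
          = p3c n n1 m2 ∧
        ((univ.filter (fun p : Fin (n + n1) × Fin (n + n1) =>
            (p.1 : ℕ) < n ∧ n ≤ (p.2 : ℕ) ∧ Vco m1 m2 (augDesign n n1 (m1 + m2) r d0 d1 d2) p.1 p.2 = w3 m2 + 1)).card : ℝ)
          = q3c n n1 m2))) := by
  classical
  subst hm1
  -- extract U-type structure
  have hd0' : ∀ k : Fin (0+m2), (∀ i, d0 i k < 3)
      ∧ ∀ v < 3, 3 * (univ.filter (fun i => d0 i k = v)).card = n := by
    intro k
    have h := hd0 k
    rwa [if_neg (by omega)] at h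
  have hd1' : ∀ k : Fin (0+m2), (∀ i, d1 i k < 3)
      ∧ ∀ v < 3, 3 * (univ.filter (fun i => d1 i k = v)).card = n1 := by
    intro k
    have h := hd1 k
    rwa [if_neg (by omega)] at h
  have h0v : ∀ i k, d0 i k < 3 := fun i k => (hd0' k).1 i
  have h1v : ∀ i k, d1 i k < 3 := fun i k => (hd1' k).1 i
  have h2v : ∀ i k, d2 i k = 1 ∨ d2 i k = 2 := hd2.1
  have hc : (1:ℝ) < (27:ℝ)/23 := by norm_num
  set D := augDesign n n1 (0 + m2) r d0 d1 d2 with hDdef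
  set WD0 := WD (fun k : Fin (0 + m2) => qfun 0 m2 0 (k : ℕ)) d0 with hWD0def
  -- pair statistics
  set V1 : Fin n1 × Fin n1 → ℕ :=
    fun p => (univ.filter (fun k : Fin (0+m2) => d1 p.1 k = d1 p.2 k)).card with hV1def
  set T1 : Fin n1 × Fin n1 → ℕ :=
    fun p => (univ.filter (fun k : Fin r => d2 p.1 k = d2 p.2 k)).card with hT1def
  set V3 : Fin n × Fin n1 → ℕ :=
    fun p => (univ.filter (fun k : Fin (0+m2) => d0 p.1 k = d1 p.2 k)).card with hV3def
  set S2 : Finset (Fin n1 × Fin n1) := univ.filter (fun p => p.1 ≠ p.2) with hS2def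
  set f2 : Fin n1 × Fin n1 → ℤ := fun p => ((V1 p + T1 p : ℕ) : ℤ) with hf2def
  set f3 : Fin n × Fin n1 → ℤ := fun p => ((V3 p : ℕ) : ℤ) with hf3def
  set SS2 : ℝ := ∑ p ∈ S2, ((27:ℝ)/23) ^ (V1 p + T1 p) with hSS2def
  set SS3 : ℝ := ∑ p : Fin n × Fin n1, ((27:ℝ)/23) ^ (V3 p) with hSS3def
  set w2' : ℤ := w2 n1 m2 r with hw2'def
  set w3' : ℤ := ((w3 m2 : ℕ) : ℤ) with hw3'def
  set B2 : ℝ := p2c n1 m2 r * ((27:ℝ)/23) ^ w2' + q2c n1 m2 r * ((27:ℝ)/23) ^ (w2' + 1) with hB2def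
  set B3 : ℝ := p3c n n1 m2 * ((27:ℝ)/23) ^ (w3 m2) + q3c n n1 m2 * ((27:ℝ)/23) ^ (w3 m2 + 1) with hB3def
  -- zpow versions of the sums
  have hSS2z : SS2 = ∑ p ∈ S2, ((27:ℝ)/23) ^ (f2 p) := by
    rw [hSS2def]
    exact Finset.sum_congr rfl (fun p _ => by rw [hf2def, zpow_natCast])
  have hSS3z : SS3 = ∑ p ∈ (univ : Finset (Fin n × Fin n1)), ((27:ℝ)/23) ^ (f3 p) := by
    rw [hSS3def]
    exact Finset.sum_congr rfl (fun p _ => by rw [hf3def, zpow_natCast])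
  -- cardinalities
  have hcard2N : S2.card + n1 = n1 * n1 := card_ne_pairs n1
  have hcard2 : (S2.card : ℝ) = (n1:ℝ) * ((n1:ℝ) - 1) := by
    have : ((S2.card : ℕ) : ℝ) + (n1:ℝ) = (n1:ℝ) * (n1:ℝ) := by exact_mod_cast congrArg (Nat.cast : ℕ → ℝ) hcard2N
    nlinarith [this]
  have hcard3 : (((univ : Finset (Fin n × Fin n1)).card : ℕ) : ℝ) = (n:ℝ) * (n1:ℝ) := by
    simp
  -- column sums
  have hrow1 : ∀ (k : Fin (0+m2)) (a : Fin n1),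
      3 * (univ.filter (fun b => d1 b k = d1 a k)).card = n1 :=
    fun k a => (hd1' k).2 _ ((hd1' k).1 a)
  have hrow2 : ∀ (k : Fin r) (a : Fin n1),
      2 * (univ.filter (fun b => d2 b k = d2 a k)).card = n1 := by
    intro k a
    rcases hd2.1 a k with h | h <;> rw [h]
    · exact (hd2.2 k).1
    · exact (hd2.2 k).2
  have hrow3 : ∀ (k : Fin (0+m2)) (a : Fin n),
      3 * (univ.filter (fun b => d1 b k = d0 a k)).card = n1 :=
    fun k a => (hd1' k).2 _ ((hd0' k).1 a)
  -- total coincidence sums, natural-number versions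
  have hsumV1 : 3 * (∑ p ∈ S2, V1 p) + (0+m2) * (3 * n1) = (0+m2) * (n1 * n1) := by
    have e : (∑ p ∈ S2, V1 p) = ∑ k : Fin (0+m2), (S2.filter (fun p => d1 p.1 k = d1 p.2 k)).card := by
      rw [hV1def]
      exact sum_card_swap S2 (fun p k => d1 p.1 k = d1 p.2 k)
    have hcol : ∀ k : Fin (0+m2),
        3 * (S2.filter (fun p => d1 p.1 k = d1 p.2 k)).card + 3 * n1 = n1 * n1 := by
      intro k
      have h := cnt_pairs (fun b => d1 b k) 3 (fun a => hrow1 k a)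
      rw [hS2def, Finset.filter_filter]
      exact h
    rw [e, Finset.mul_sum]
    calc (∑ k : Fin (0+m2), 3 * (S2.filter (fun p => d1 p.1 k = d1 p.2 k)).card) + (0+m2) * (3*n1)
        = ∑ k : Fin (0+m2), (3 * (S2.filter (fun p => d1 p.1 k = d1 p.2 k)).card + 3 * n1) := by
          rw [Finset.sum_add_distrib, Finset.sum_const, Finset.card_univ, Fintype.card_fin, smul_eq_mul]
      _ = ∑ _k : Fin (0+m2), n1 * n1 := Finset.sum_congr rfl (fun k _ => hcol k)
      _ = (0+m2) * (n1*n1) := by rw [Finset.sum_const, Finset.card_univ, Fintype.card_fin, smul_eq_mul]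
  have hsumT1 : 2 * (∑ p ∈ S2, T1 p) + r * (2 * n1) = r * (n1 * n1) := by
    have e : (∑ p ∈ S2, T1 p) = ∑ k : Fin r, (S2.filter (fun p => d2 p.1 k = d2 p.2 k)).card := by
      rw [hT1def]
      exact sum_card_swap S2 (fun p k => d2 p.1 k = d2 p.2 k)
    have hcol : ∀ k : Fin r,
        2 * (S2.filter (fun p => d2 p.1 k = d2 p.2 k)).card + 2 * n1 = n1 * n1 := by
      intro k
      have h := cnt_pairs (fun b => d2 b k) 2 (fun a => hrow2 k a)
      rw [hS2def, Finset.filter_filter]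
      exact h
    rw [e, Finset.mul_sum]
    calc (∑ k : Fin r, 2 * (S2.filter (fun p => d2 p.1 k = d2 p.2 k)).card) + r * (2*n1)
        = ∑ k : Fin r, (2 * (S2.filter (fun p => d2 p.1 k = d2 p.2 k)).card + 2 * n1) := by
          rw [Finset.sum_add_distrib, Finset.sum_const, Finset.card_univ, Fintype.card_fin, smul_eq_mul]
      _ = ∑ _k : Fin r, n1 * n1 := Finset.sum_congr rfl (fun k _ => hcol k)
      _ = r * (n1*n1) := by rw [Finset.sum_const, Finset.card_univ, Fintype.card_fin, smul_eq_mul]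
  have hsumV3 : 3 * (∑ p : Fin n × Fin n1, V3 p) = (0+m2) * (n * n1) := by
    have e : (∑ p : Fin n × Fin n1, V3 p)
        = ∑ k : Fin (0+m2), ((univ : Finset (Fin n × Fin n1)).filter (fun p => d0 p.1 k = d1 p.2 k)).card := by
      rw [hV3def]
      exact sum_card_swap univ (fun (p : Fin n × Fin n1) (k : Fin (0+m2)) => d0 p.1 k = d1 p.2 k)
    have hcol : ∀ k : Fin (0+m2),
        3 * ((univ : Finset (Fin n × Fin n1)).filter (fun p => d0 p.1 k = d1 p.2 k)).card = n * n1 :=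
      fun k => cnt_cross (fun a => d0 a k) (fun b => d1 b k) 3 (fun a => hrow3 k a)
    rw [e, Finset.mul_sum]
    calc (∑ k : Fin (0+m2), 3 * ((univ : Finset (Fin n × Fin n1)).filter (fun p => d0 p.1 k = d1 p.2 k)).card)
        = ∑ _k : Fin (0+m2), n * n1 := Finset.sum_congr rfl (fun k _ => hcol k)
      _ = (0+m2) * (n*n1) := by rw [Finset.sum_const, Finset.card_univ, Fintype.card_fin, smul_eq_mul]
  -- real versions
  have hsum2 : ((∑ p ∈ S2, f2 p : ℤ) : ℝ)
      = (m2:ℝ) * n1 * ((n1:ℝ) - 3) / 3 + (r:ℝ) * n1 * ((n1:ℝ) - 2) / 2 := by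
    have h0 : ((∑ p ∈ S2, f2 p : ℤ) : ℝ)
        = (∑ p ∈ S2, ((V1 p : ℕ):ℝ)) + (∑ p ∈ S2, ((T1 p : ℕ):ℝ)) := by
      rw [hf2def]
      push_cast
      rw [Finset.sum_add_distrib]
    have h1 := congrArg (Nat.cast : ℕ → ℝ) hsumV1
    push_cast at h1
    have h2 := congrArg (Nat.cast : ℕ → ℝ) hsumT1
    push_cast at h2
    rw [h0]
    linarith [h1, h2]
  have hsum3 : ((∑ p : Fin n × Fin n1, f3 p : ℤ) : ℝ) = (m2:ℝ) * n * n1 / 3 := by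
    have h0 : ((∑ p : Fin n × Fin n1, f3 p : ℤ) : ℝ) = (∑ p : Fin n × Fin n1, ((V3 p : ℕ):ℝ)) := by
      rw [hf3def]
      push_cast
      rfl
    have h1 := congrArg (Nat.cast : ℕ → ℝ) hsumV3
    push_cast at h1
    rw [h0]
    linarith [h1]
  -- identities for p,q
  have hq2 : q2c n1 m2 r = ((∑ p ∈ S2, f2 p : ℤ) : ℝ) - (S2.card : ℝ) * (w2' : ℝ) := by
    rw [q2c, hsum2, hcard2, hw2'def]
  have hp2 : p2c n1 m2 r = (S2.card : ℝ) - q2c n1 m2 r := by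
    rw [p2c, hcard2]
  have hq3 : q3c n n1 m2 = ((∑ p : Fin n × Fin n1, f3 p : ℤ) : ℝ)
      - (((univ : Finset (Fin n × Fin n1)).card : ℕ) : ℝ) * (w3' : ℝ) := by
    rw [q3c, hsum3, hcard3, hw3'def]
    push_cast
    try ring
  have hp3 : p3c n n1 m2 = (((univ : Finset (Fin n × Fin n1)).card : ℕ) : ℝ) - q3c n n1 m2 := by
    rw [p3c, hcard3]
  -- canonical forms of the bounds
  have hB2form : B2 = (S2.card : ℝ) * ((27:ℝ)/23) ^ w2'
      + (((∑ p ∈ S2, f2 p : ℤ) : ℝ) - (S2.card : ℝ) * (w2' : ℝ))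
        * (((27:ℝ)/23) ^ (w2' + 1) - ((27:ℝ)/23) ^ w2') := by
    rw [hB2def, hp2, hq2]
    ring
  have hB3form : B3 = (((univ : Finset (Fin n × Fin n1)).card : ℕ) : ℝ) * ((27:ℝ)/23) ^ w3'
      + (((∑ p : Fin n × Fin n1, f3 p : ℤ) : ℝ)
          - (((univ : Finset (Fin n × Fin n1)).card : ℕ) : ℝ) * (w3' : ℝ))
        * (((27:ℝ)/23) ^ (w3' + 1) - ((27:ℝ)/23) ^ w3') := by
    rw [hB3def, hp3, hq3, hw3'def]
    rw [show (((w3 m2 : ℕ) : ℤ) + 1) = (((w3 m2 + 1 : ℕ) : ℤ)) by push_cast; ring]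
    rw [zpow_natCast, zpow_natCast]
    ring
  -- secant bounds
  have hB2le : B2 ≤ SS2 := by
    rw [hB2form, hSS2z]
    exact sum_secant_le S2 f2 ((27:ℝ)/23) hc w2'
  have hB3le : B3 ≤ SS3 := by
    rw [hB3form, hSS3z]
    exact sum_secant_le univ f3 ((27:ℝ)/23) hc w3'
  have hSS2iff : SS2 = B2 ↔ ∀ p ∈ S2, f2 p = w2' ∨ f2 p = w2' + 1 := by
    rw [hB2form, hSS2z]
    rw [eq_comm]
    exact sum_secant_eq_iff S2 f2 ((27:ℝ)/23) hc w2'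
  have hSS3iff : SS3 = B3 ↔ ∀ p ∈ (univ : Finset (Fin n × Fin n1)), f3 p = w3' ∨ f3 p = w3' + 1 := by
    rw [hB3form, hSS3z]
    rw [eq_comm]
    exact sum_secant_eq_iff univ f3 ((27:ℝ)/23) hc w3'
  -- the main WD identity
  have hn0 : n ≠ 0 := by omega
  have hb1 : (∑ a : Fin n, ∑ b : Fin n, ∏ k : Fin (0+m2+r), ((3:ℝ)/2
        - |uVal (qfun 0 m2 r (k:ℕ)) (D (Fin.castAdd n1 a) k) - uVal (qfun 0 m2 r (k:ℕ)) (D (Fin.castAdd n1 b) k)|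
          * (1 - |uVal (qfun 0 m2 r (k:ℕ)) (D (Fin.castAdd n1 a) k) - uVal (qfun 0 m2 r (k:ℕ)) (D (Fin.castAdd n1 b) k)|)))
      = ((3:ℝ)/2)^r * ((n:ℝ)^2 * (WD0 + ((4:ℝ)/3)^(0+m2))) := by
    calc _ = ∑ a : Fin n, ∑ b : Fin n, ((3:ℝ)/2)^r * (∏ k : Fin (0+m2), ((3:ℝ)/2
            - |uVal (qfun 0 m2 0 (k:ℕ)) (d0 a k) - uVal (qfun 0 m2 0 (k:ℕ)) (d0 b k)|
              * (1 - |uVal (qfun 0 m2 0 (k:ℕ)) (d0 a k) - uVal (qfun 0 m2 0 (k:ℕ)) (d0 b k)|))) :=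
          Finset.sum_congr rfl (fun a _ => Finset.sum_congr rfl (fun b _ => prod_ii d0 d1 d2 a b))
      _ = ((3:ℝ)/2)^r * ∑ a : Fin n, ∑ b : Fin n, (∏ k : Fin (0+m2), ((3:ℝ)/2
            - |uVal (qfun 0 m2 0 (k:ℕ)) (d0 a k) - uVal (qfun 0 m2 0 (k:ℕ)) (d0 b k)|
              * (1 - |uVal (qfun 0 m2 0 (k:ℕ)) (d0 a k) - uVal (qfun 0 m2 0 (k:ℕ)) (d0 b k)|))) := by
          rw [Finset.mul_sum]
          exact Finset.sum_congr rfl (fun a _ => by rw [Finset.mul_sum])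
      _ = ((3:ℝ)/2)^r * ((n:ℝ)^2 * (WD0 + ((4:ℝ)/3)^(0+m2))) := by
          congr 1
          rw [hWD0def]
          exact WD_sum _ d0 hn0
  have hb2 : (∑ a : Fin n, ∑ b : Fin n1, ∏ k : Fin (0+m2+r), ((3:ℝ)/2
        - |uVal (qfun 0 m2 r (k:ℕ)) (D (Fin.castAdd n1 a) k) - uVal (qfun 0 m2 r (k:ℕ)) (D (Fin.natAdd n b) k)|
          * (1 - |uVal (qfun 0 m2 r (k:ℕ)) (D (Fin.castAdd n1 a) k) - uVal (qfun 0 m2 r (k:ℕ)) (D (Fin.natAdd n b) k)|)))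
      = ((23:ℝ)/18)^(0+m2+r) * SS3 := by
    calc _ = ∑ a : Fin n, ∑ b : Fin n1, ((23:ℝ)/18)^(0+m2+r) * ((27:ℝ)/23)^(V3 (a, b)) :=
          Finset.sum_congr rfl (fun a _ => Finset.sum_congr rfl
            (fun b _ => prod_if d0 d1 d2 h0v h1v h2v a b))
      _ = ((23:ℝ)/18)^(0+m2+r) * ∑ a : Fin n, ∑ b : Fin n1, ((27:ℝ)/23)^(V3 (a, b)) := by
          rw [Finset.mul_sum]
          exact Finset.sum_congr rfl (fun a _ => by rw [Finset.mul_sum])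
      _ = ((23:ℝ)/18)^(0+m2+r) * SS3 := by
          congr 1
          rw [hSS3def, Fintype.sum_prod_type]
  have hb3 : (∑ a : Fin n1, ∑ b : Fin n, ∏ k : Fin (0+m2+r), ((3:ℝ)/2
        - |uVal (qfun 0 m2 r (k:ℕ)) (D (Fin.natAdd n a) k) - uVal (qfun 0 m2 r (k:ℕ)) (D (Fin.castAdd n1 b) k)|
          * (1 - |uVal (qfun 0 m2 r (k:ℕ)) (D (Fin.natAdd n a) k) - uVal (qfun 0 m2 r (k:ℕ)) (D (Fin.castAdd n1 b) k)|)))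
      = ((23:ℝ)/18)^(0+m2+r) * SS3 := by
    calc _ = ∑ a : Fin n1, ∑ b : Fin n, ((23:ℝ)/18)^(0+m2+r) * ((27:ℝ)/23)^(V3 (b, a)) :=
          Finset.sum_congr rfl (fun a _ => Finset.sum_congr rfl
            (fun b _ => prod_fi d0 d1 d2 h0v h1v h2v a b))
      _ = ∑ b : Fin n, ∑ a : Fin n1, ((23:ℝ)/18)^(0+m2+r) * ((27:ℝ)/23)^(V3 (b, a)) := Finset.sum_comm
      _ = ((23:ℝ)/18)^(0+m2+r) * ∑ b : Fin n, ∑ a : Fin n1, ((27:ℝ)/23)^(V3 (b, a)) := by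
          rw [Finset.mul_sum]
          exact Finset.sum_congr rfl (fun a _ => by rw [Finset.mul_sum])
      _ = ((23:ℝ)/18)^(0+m2+r) * SS3 := by
          congr 1
          rw [hSS3def, Fintype.sum_prod_type]
  have hb4 : (∑ a : Fin n1, ∑ b : Fin n1, ∏ k : Fin (0+m2+r), ((3:ℝ)/2
        - |uVal (qfun 0 m2 r (k:ℕ)) (D (Fin.natAdd n a) k) - uVal (qfun 0 m2 r (k:ℕ)) (D (Fin.natAdd n b) k)|
          * (1 - |uVal (qfun 0 m2 r (k:ℕ)) (D (Fin.natAdd n a) k) - uVal (qfun 0 m2 r (k:ℕ)) (D (Fin.natAdd n b) k)|)))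
      = ((23:ℝ)/18)^(0+m2+r) * SS2 + (n1:ℝ) * ((3:ℝ)/2)^(0+m2+r) := by
    have hdV : ∀ a : Fin n1, V1 (a, a) = 0 + m2 := by
      intro a
      rw [hV1def]
      simp
    have hdT : ∀ a : Fin n1, T1 (a, a) = r := by
      intro a
      rw [hT1def]
      simp
    calc _ = ∑ a : Fin n1, ∑ b : Fin n1, ((23:ℝ)/18)^(0+m2+r) * ((27:ℝ)/23)^(V1 (a, b) + T1 (a, b)) :=
          Finset.sum_congr rfl (fun a _ => Finset.sum_congr rfl
            (fun b _ => prod_ff d0 d1 d2 h1v h2v a b))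
      _ = ∑ p : Fin n1 × Fin n1, ((23:ℝ)/18)^(0+m2+r) * ((27:ℝ)/23)^(V1 p + T1 p) := by
          rw [Fintype.sum_prod_type]
      _ = (∑ p ∈ S2, ((23:ℝ)/18)^(0+m2+r) * ((27:ℝ)/23)^(V1 p + T1 p))
          + ∑ a : Fin n1, ((23:ℝ)/18)^(0+m2+r) * ((27:ℝ)/23)^(V1 (a, a) + T1 (a, a)) := by
          rw [hS2def]
          exact sum_diag_split _
      _ = ((23:ℝ)/18)^(0+m2+r) * SS2 + (n1:ℝ) * ((3:ℝ)/2)^(0+m2+r) := by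
          rw [hSS2def, Finset.mul_sum]
          congr 1
          rw [Finset.sum_congr rfl (fun a _ => by rw [hdV a, hdT a])]
          rw [Finset.sum_const, Finset.card_univ, Fintype.card_fin, nsmul_eq_mul]
          congr 1
          rw [← mul_pow]
          norm_num
  have hTOT : (∑ i : Fin (n+n1), ∑ j : Fin (n+n1), ∏ k : Fin (0+m2+r), ((3:ℝ)/2
        - |uVal (qfun 0 m2 r (k:ℕ)) (D i k) - uVal (qfun 0 m2 r (k:ℕ)) (D j k)|
          * (1 - |uVal (qfun 0 m2 r (k:ℕ)) (D i k) - uVal (qfun 0 m2 r (k:ℕ)) (D j k)|)))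
      = ((3:ℝ)/2)^r * ((n:ℝ)^2 * (WD0 + ((4:ℝ)/3)^(0+m2)))
        + ((23:ℝ)/18)^(0+m2+r) * SS3
        + ((23:ℝ)/18)^(0+m2+r) * SS3
        + (((23:ℝ)/18)^(0+m2+r) * SS2 + (n1:ℝ) * ((3:ℝ)/2)^(0+m2+r)) := by
    rw [sum_prod_split n n1]
    rw [hb1, hb2, hb3, hb4]
  have hWDD : WD (fun k : Fin (0 + m2 + r) => qfun 0 m2 r (k : ℕ)) D
      = Cconst n n1 m2 r + ((n:ℝ)^2 / ((n:ℝ) + (n1:ℝ))^2) * ((3:ℝ)/2)^r * WD0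
        + (1 / ((n:ℝ) + (n1:ℝ))^2) * ((23:ℝ)/18)^(m2+r) * (SS2 + 2 * SS3) := by
    unfold WD
    rw [hTOT, Cconst]
    simp only [Nat.zero_add]
    have hNR : ((n + n1 : ℕ) : ℝ) = (n:ℝ) + (n1:ℝ) := by push_cast; ring
    rw [hNR]
    have hNne : ((n:ℝ) + (n1:ℝ)) ≠ 0 := by
      have : (1:ℝ) ≤ (n:ℝ) := by exact_mod_cast hn
      positivity
    field_simp
    ring
  -- bound identity for LBW33
  have hLB : LBW33 n n1 m2 r WD0
      = Cconst n n1 m2 r + ((n:ℝ)^2 / ((n:ℝ) + (n1:ℝ))^2) * ((3:ℝ)/2)^r * WD0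
        + (1 / ((n:ℝ) + (n1:ℝ))^2) * ((23:ℝ)/18)^(m2+r) * (B2 + 2 * B3) := by
    rw [LBW33, hB2def, hB3def, hw2'def]
  have hKpos : (0:ℝ) < (1 / ((n:ℝ) + (n1:ℝ))^2) * ((23:ℝ)/18)^(m2+r) := by
    have hn' : (0:ℝ) < (n:ℝ) := by exact_mod_cast hn
    have hn1' : (0:ℝ) < (n1:ℝ) := by positivity
    positivity
  rw [hWDD, hLB]
  -- card set translations
  have hVT : ∀ p : Fin n1 × Fin n1,
      ((Vco 0 m2 D (Fin.natAdd n p.1) (Fin.natAdd n p.2)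
        + Tco (0 + m2) D (Fin.natAdd n p.1) (Fin.natAdd n p.2) : ℕ) : ℤ) = f2 p := by
    intro p
    rw [hDdef, Vco_ff d0 d1 d2 p.1 p.2, Tco_ff d0 d1 d2 h2v p.1 p.2]
  have hVc : ∀ p : Fin n × Fin n1,
      Vco 0 m2 D (Fin.castAdd n1 p.1) (Fin.natAdd n p.2) = V3 p := by
    intro p
    rw [hDdef, Vco_if d0 d1 d2 p.1 p.2]
  have hA2 : (univ.filter (fun p : Fin (n + n1) × Fin (n + n1) =>
        n ≤ (p.1 : ℕ) ∧ n ≤ (p.2 : ℕ) ∧ p.1 ≠ p.2 ∧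
        ((Vco 0 m2 D p.1 p.2 + Tco (0 + m2) D p.1 p.2 : ℕ) : ℤ) = w2')).card
      = (S2.filter (fun p => f2 p = w2')).card := by
    refine (bridge_follow n n1 (fun p => p.1 ≠ p.2 ∧
      ((Vco 0 m2 D p.1 p.2 + Tco (0 + m2) D p.1 p.2 : ℕ) : ℤ) = w2')).trans ?_
    rw [hS2def, Finset.filter_filter]
    apply congrArg Finset.card
    apply Finset.filter_congr
    intro p _
    rw [hVT p, natAdd_inj_iff]
  have hB2c : (univ.filter (fun p : Fin (n + n1) × Fin (n + n1) =>
        n ≤ (p.1 : ℕ) ∧ n ≤ (p.2 : ℕ) ∧ p.1 ≠ p.2 ∧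
        ((Vco 0 m2 D p.1 p.2 + Tco (0 + m2) D p.1 p.2 : ℕ) : ℤ) = w2' + 1)).card
      = (S2.filter (fun p => f2 p = w2' + 1)).card := by
    refine (bridge_follow n n1 (fun p => p.1 ≠ p.2 ∧
      ((Vco 0 m2 D p.1 p.2 + Tco (0 + m2) D p.1 p.2 : ℕ) : ℤ) = w2' + 1)).trans ?_
    rw [hS2def, Finset.filter_filter]
    apply congrArg Finset.card
    apply Finset.filter_congr
    intro p _
    rw [hVT p, natAdd_inj_iff]
  have hA3 : (univ.filter (fun p : Fin (n + n1) × Fin (n + n1) =>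
        (p.1 : ℕ) < n ∧ n ≤ (p.2 : ℕ) ∧ Vco 0 m2 D p.1 p.2 = w3 m2)).card
      = ((univ : Finset (Fin n × Fin n1)).filter (fun p => f3 p = w3')).card := by
    refine (bridge_cross n n1 (fun p => Vco 0 m2 D p.1 p.2 = w3 m2)).trans ?_
    apply congrArg Finset.card
    apply Finset.filter_congr
    intro p _
    rw [hVc p, hf3def, hw3'def]
    simp only [eq_iff_iff]
    exact ⟨fun h => by exact_mod_cast h, fun h => by exact_mod_cast h⟩
  have hB3c : (univ.filter (fun p : Fin (n + n1) × Fin (n + n1) =>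
        (p.1 : ℕ) < n ∧ n ≤ (p.2 : ℕ) ∧ Vco 0 m2 D p.1 p.2 = w3 m2 + 1)).card
      = ((univ : Finset (Fin n × Fin n1)).filter (fun p => f3 p = w3' + 1)).card := by
    refine (bridge_cross n n1 (fun p => Vco 0 m2 D p.1 p.2 = w3 m2 + 1)).trans ?_
    apply congrArg Finset.card
    apply Finset.filter_congr
    intro p _
    rw [hVc p, hf3def, hw3'def]
    simp only [eq_iff_iff]
    constructor
    · intro h
      push_cast
      exact_mod_cast h
    · intro h
      exact_mod_cast h
  -- pointwise ↔ cards
  have hpw2 : (∀ p ∈ S2, f2 p = w2' ∨ f2 p = w2' + 1)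
      ↔ (((S2.filter (fun p => f2 p = w2')).card : ℝ) = p2c n1 m2 r
        ∧ ((S2.filter (fun p => f2 p = w2' + 1)).card : ℝ) = q2c n1 m2 r) := by
    constructor
    · intro hpw
      have h1 := count_w1 S2 f2 w2' hpw
      have h0 := count_w0 S2 f2 w2' hpw
      constructor
      · rw [hp2, hq2]
        exact_mod_cast congrArg (Int.cast : ℤ → ℝ) h0
      · rw [hq2]
        exact_mod_cast congrArg (Int.cast : ℤ → ℝ) h1
    · rintro ⟨hA, hB⟩
      apply pointwise_of_counts S2 f2 w2'
      have : ((S2.filter (fun p => f2 p = w2')).card : ℝ)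
          + ((S2.filter (fun p => f2 p = w2' + 1)).card : ℝ) = (S2.card : ℝ) := by
        rw [hA, hB, hp2]; ring
      exact_mod_cast this
  have hpw3 : (∀ p ∈ (univ : Finset (Fin n × Fin n1)), f3 p = w3' ∨ f3 p = w3' + 1)
      ↔ ((((univ : Finset (Fin n × Fin n1)).filter (fun p => f3 p = w3')).card : ℝ) = p3c n n1 m2
        ∧ (((univ : Finset (Fin n × Fin n1)).filter (fun p => f3 p = w3' + 1)).card : ℝ) = q3c n n1 m2) := by
    constructor
    · intro hpw
      have h1 := count_w1 univ f3 w3' hpw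
      have h0 := count_w0 univ f3 w3' hpw
      constructor
      · rw [hp3, hq3]
        exact_mod_cast congrArg (Int.cast : ℤ → ℝ) h0
      · rw [hq3]
        exact_mod_cast congrArg (Int.cast : ℤ → ℝ) h1
    · rintro ⟨hA, hB⟩
      apply pointwise_of_counts univ f3 w3'
      have : ((((univ : Finset (Fin n × Fin n1)).filter (fun p => f3 p = w3')).card) : ℝ)
          + ((((univ : Finset (Fin n × Fin n1)).filter (fun p => f3 p = w3' + 1)).card) : ℝ)
            = (((univ : Finset (Fin n × Fin n1)).card : ℕ) : ℝ) := by
        rw [hA, hB, hp3]; ring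
      exact_mod_cast this
  constructor
  · -- the inequality
    have hsum : B2 + 2 * B3 ≤ SS2 + 2 * SS3 := by linarith
    have := mul_le_mul_of_nonneg_left hsum (le_of_lt hKpos)
    linarith
  · -- the equality characterization
    rw [add_right_inj, mul_right_inj' (ne_of_gt hKpos)]
    have hmid : SS2 + 2*SS3 = B2 + 2*B3
        ↔ ((∀ p ∈ S2, f2 p = w2' ∨ f2 p = w2' + 1)
          ∧ (∀ p ∈ (univ : Finset (Fin n × Fin n1)), f3 p = w3' ∨ f3 p = w3' + 1)) := by
      constructor
      · intro h
        have h2 : SS2 = B2 := by linarith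
        have h3 : SS3 = B3 := by linarith
        exact ⟨hSS2iff.mp h2, hSS3iff.mp h3⟩
      · rintro ⟨ha, hb⟩
        have e2 := hSS2iff.mpr ha
        have e3 := hSS3iff.mpr hb
        linarith
    rw [hmid, hpw2, hpw3, ← hA2, ← hB2c, ← hA3, ← hB3c]

end CAUD

end
end

section
/- Let n ≥ 1, n1 ≥ 2, m1, m2 ≥ 0 with m1+m2 ≥ 1, r ≥ 0, let d0 ∈ U(n; 2^{m1} 3^{m2}), d1 ∈ U(n1; 2^{m1} 3^{m2}), let d2 be a column-balanced n1×r matrix with entries in {1,2}, let D3 be the corresponding column augmented design, and let D3b be D3 with the appended blocking column. Then WD(D3b) ≥ C(r+1) + (n²/(n+n1)²)·(3/2)^{r+1}·WD(d0) + (1/(n+n1)²)·(5/4)^{m1}·(23/18)^{m2+r}·( (3/2)·T1 + 2·(5/4)·T2 ). -/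
open Finset

noncomputable section

namespace CAUD

/-! ### Auxiliary lemmas -/

def gval (q x y : ℕ) : ℝ :=
  (3 : ℝ) / 2 - |uVal q x - uVal q y| * (1 - |uVal q x - uVal q y|)

lemma gval_self (q x : ℕ) : gval q x x = 3/2 := by simp [gval]

lemma exp_aa : Real.exp aa = 6/5 := by rw [aa, Real.exp_log]; norm_num
lemma exp_bb : Real.exp bb = 27/23 := by rw [bb, Real.exp_log]; norm_num

lemma gval_comm (q x y : ℕ) : gval q x y = gval q y x := by
  rw [gval, gval, abs_sub_comm]

lemma gval2 {x y : ℕ} (hx : x < 2) (hy : y < 2) :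
    gval 2 x y = 5/4 * Real.exp (aa * (if x = y then 1 else 0)) := by
  interval_cases x <;> interval_cases y <;>
    simp [gval, uVal, exp_aa, mul_one, Real.exp_zero] <;> norm_num [abs_of_nonneg]

lemma gval3 {x y : ℕ} (hx : x < 3) (hy : y < 3) :
    gval 3 x y = 23/18 * Real.exp (bb * (if x = y then 1 else 0)) := by
  interval_cases x <;> interval_cases y <;>
    simp [gval, uVal, exp_bb, mul_one, Real.exp_zero] <;> norm_num [abs_of_nonneg]

lemma gval3_zero {v : ℕ} (hv : v = 1 ∨ v = 2) : gval 3 0 v = 23/18 := by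
  have hv3 : v < 3 := by omega
  rw [gval3 (by norm_num) hv3, if_neg (by omega)]
  simp

lemma jensen_exp {ι : Type*} (t : Finset ι) (f : ι → ℝ) :
    (t.card : ℝ) * Real.exp ((∑ i ∈ t, f i) / t.card) ≤ ∑ i ∈ t, Real.exp (f i) := by
  rcases t.eq_empty_or_nonempty with rfl | ht
  · simp
  have hc : (0:ℝ) < t.card := by exact_mod_cast Finset.card_pos.2 ht
  have h := convexOn_exp.map_sum_le (t := t) (w := fun _ => (t.card : ℝ)⁻¹) (p := f)
    (fun i _ => by positivity)
    (by rw [Finset.sum_const, nsmul_eq_mul]; exact mul_inv_cancel₀ hc.ne')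
    (fun i _ => Set.mem_univ _)
  have h1 : Real.exp ((∑ i ∈ t, f i)/t.card) ≤ (t.card:ℝ)⁻¹ * ∑ i ∈ t, Real.exp (f i) := by
    simpa [smul_eq_mul, ← Finset.mul_sum, div_eq_inv_mul] using h
  calc (t.card : ℝ) * Real.exp ((∑ i ∈ t, f i) / t.card)
      ≤ (t.card : ℝ) * ((t.card:ℝ)⁻¹ * ∑ i ∈ t, Real.exp (f i)) :=
        mul_le_mul_of_nonneg_left h1 hc.le
    _ = ∑ i ∈ t, Real.exp (f i) := by field_simp

lemma count_balanced {N N' q : ℕ} (hq : 0 < q) (d : Fin N → ℕ) (e : Fin N' → ℕ)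
    (hd : ∀ i, d i < q)
    (hdc : ∀ v < q, q * (univ.filter (fun i => d i = v)).card = N)
    (hec : ∀ v < q, q * (univ.filter (fun j => e j = v)).card = N') :
    ∑ i : Fin N, ∑ j : Fin N', (if d i = e j then (1:ℝ) else 0) = N * N' / q := by
  have key : ∀ (i : Fin N) (j : Fin N'), (if d i = e j then (1:ℝ) else 0)
      = ∑ v ∈ Finset.range q, (if d i = v then (1:ℝ) else 0) * (if e j = v then 1 else 0) := by
    intro i j
    rw [Finset.sum_eq_single (d i)]
    · by_cases h : d i = e j <;> simp [h, eq_comm]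
    · intro v _ hv; simp [Ne.symm hv]
    · intro h; exact absurd (Finset.mem_range.2 (hd i)) h
  simp_rw [key]
  have step : ∀ i : Fin N, ∑ j : Fin N', ∑ v ∈ Finset.range q,
      (if d i = v then (1:ℝ) else 0) * (if e j = v then 1 else 0)
      = ∑ v ∈ Finset.range q, (if d i = v then (1:ℝ) else 0) *
          ∑ j : Fin N', (if e j = v then (1:ℝ) else 0) := by
    intro i
    rw [Finset.sum_comm]
    exact Finset.sum_congr rfl fun v _ => by rw [Finset.mul_sum]
  simp_rw [step]
  rw [Finset.sum_comm]
  have hq' : (q:ℝ) ≠ 0 := by positivity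
  have key2 : ∀ v ∈ Finset.range q, (∑ i : Fin N, (if d i = v then (1:ℝ) else 0) *
      ∑ j : Fin N', (if e j = v then (1:ℝ) else 0)) = (N:ℝ)/q * ((N':ℝ)/q) := by
    intro v hv
    rw [Finset.mem_range] at hv
    rw [← Finset.sum_mul, Finset.sum_boole, Finset.sum_boole]
    have h1 := hdc v hv
    have h2 := hec v hv
    have e1 : ((univ.filter (fun i => d i = v)).card : ℝ) = (N:ℝ)/q := by
      field_simp; exact_mod_cast Nat.mul_comm _ _ ▸ h1
    have e2 : ((univ.filter (fun j => e j = v)).card : ℝ) = (N':ℝ)/q := by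
      field_simp; exact_mod_cast Nat.mul_comm _ _ ▸ h2
    rw [e1, e2]
  rw [Finset.sum_congr rfl key2, Finset.sum_const, Finset.card_range, nsmul_eq_mul]
  field_simp

def wght (m1 : ℕ) (k : ℕ) : ℝ := if k < m1 then aa else bb

lemma qfun_lt {m1 m2 r k : ℕ} (hk : k < m1 + m2) : qfun m1 m2 r k = qfun m1 m2 0 k := by
  unfold qfun; split_ifs <;> omega

lemma prod_gval (m1 m2 : ℕ) (x y : Fin (m1+m2) → ℕ)
    (hx : ∀ k : Fin (m1+m2), if (k:ℕ) < m1 then x k < 2 else x k < 3)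
    (hy : ∀ k : Fin (m1+m2), if (k:ℕ) < m1 then y k < 2 else y k < 3) :
    (∏ k : Fin (m1+m2), gval (qfun m1 m2 0 (k:ℕ)) (x k) (y k)) =
      ((5:ℝ)/4)^m1 * ((23:ℝ)/18)^m2 *
        Real.exp (∑ k : Fin (m1+m2), wght m1 (k:ℕ) * (if x k = y k then 1 else 0)) := by
  have hfac : ∀ k : Fin (m1+m2), gval (qfun m1 m2 0 (k:ℕ)) (x k) (y k)
      = (if (k:ℕ) < m1 then (5:ℝ)/4 else 23/18) *
        Real.exp (wght m1 (k:ℕ) * (if x k = y k then 1 else 0)) := by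
    intro k
    have hxk := hx k; have hyk := hy k
    by_cases h : (k:ℕ) < m1
    · rw [if_pos h] at hxk hyk
      rw [show qfun m1 m2 0 (k:ℕ) = 2 by unfold qfun; rw [if_pos h],
        gval2 hxk hyk, if_pos h, wght, if_pos h]
    · rw [if_neg h] at hxk hyk
      rw [show qfun m1 m2 0 (k:ℕ) = 3 by
          unfold qfun; rw [if_neg h, if_pos (by have := k.isLt; omega)],
        gval3 hxk hyk, if_neg h, wght, if_neg h]
  rw [Finset.prod_congr rfl fun k _ => hfac k, Finset.prod_mul_distrib, ← Real.exp_sum]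
  congr 1
  rw [Fin.prod_univ_add]
  have e1 : ∀ i : Fin m1, (if ((Fin.castAdd m2 i : Fin (m1+m2)):ℕ) < m1 then (5:ℝ)/4 else 23/18)
      = 5/4 := fun i => if_pos (by simp [i.isLt])
  have e2 : ∀ i : Fin m2, (if ((Fin.natAdd m1 i : Fin (m1+m2)):ℕ) < m1 then (5:ℝ)/4 else 23/18)
      = 23/18 := fun i => if_neg (by simp)
  rw [Finset.prod_congr rfl fun i _ => e1 i, Finset.prod_congr rfl fun i _ => e2 i,
    Finset.prod_const, Finset.prod_const, Finset.card_univ, Finset.card_univ,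
    Fintype.card_fin, Fintype.card_fin]

lemma prod_gval3 (r : ℕ) (x y : Fin r → ℕ) (hx : ∀ k, x k < 3) (hy : ∀ k, y k < 3) :
    (∏ k : Fin r, gval 3 (x k) (y k)) =
      ((23:ℝ)/18)^r * Real.exp (∑ k : Fin r, bb * (if x k = y k then 1 else 0)) := by
  rw [Finset.prod_congr rfl fun k _ => gval3 (hx k) (hy k), Finset.prod_mul_distrib,
    ← Real.exp_sum, Finset.prod_const, Finset.card_univ, Fintype.card_fin]

lemma sum_wght (m1 m2 : ℕ) :
    ∑ k : Fin (m1+m2), wght m1 (k:ℕ) = m1 * aa + m2 * bb := by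
  rw [Fin.sum_univ_add]
  have e1 : ∀ i : Fin m1, wght m1 ((Fin.castAdd m2 i : Fin (m1+m2)):ℕ) = aa := by
    intro i; rw [wght, if_pos (by simp [i.isLt])]
  have e2 : ∀ i : Fin m2, wght m1 ((Fin.natAdd m1 i : Fin (m1+m2)):ℕ) = bb := by
    intro i; rw [wght, if_neg (by simp)]
  rw [Finset.sum_congr rfl fun i _ => e1 i, Finset.sum_congr rfl fun i _ => e2 i,
    Finset.sum_const, Finset.sum_const, Finset.card_univ, Finset.card_univ,
    Fintype.card_fin, Fintype.card_fin, nsmul_eq_mul, nsmul_eq_mul]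

section entries
variable {n n1 m1 m2 r : ℕ} {d0 : Fin n → Fin (m1+m2) → ℕ}
  {d1 : Fin n1 → Fin (m1+m2) → ℕ} {d2 : Fin n1 → Fin r → ℕ}

local notation "DD" => appendOne n n1 (m1+m2+r) (augDesign n n1 (m1+m2) r d0 d1 d2)

lemma D_II (i : Fin (n+n1)) (k : Fin (m1+m2+r+1)) (i0 : Fin n) (k0 : Fin (m1+m2))
    (hi : (i:ℕ) = i0) (hk : (k:ℕ) = k0) : DD i k = d0 i0 k0 := by
  have h1 : (k:ℕ) < m1+m2+r := by have := k0.isLt; omega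
  have hi' : (i:ℕ) < n := by have := i0.isLt; omega
  unfold appendOne augDesign
  rw [dif_pos h1, dif_pos hi',
    dif_pos (show ((⟨(k:ℕ), h1⟩ : Fin (m1+m2+r)) : ℕ) < m1+m2 by
      simpa using hk ▸ k0.isLt)]
  congr 1 <;> exact Fin.ext (by simpa using by omega)

lemma D_I0 (i : Fin (n+n1)) (k : Fin (m1+m2+r+1)) (hi : (i:ℕ) < n)
    (hk : m1+m2 ≤ (k:ℕ)) (hk2 : (k:ℕ) < m1+m2+r) : DD i k = 0 := by
  unfold appendOne augDesign
  rw [dif_pos hk2, dif_pos hi,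
    dif_neg (show ¬ ((⟨(k:ℕ), hk2⟩ : Fin (m1+m2+r)) : ℕ) < m1+m2 by simpa using by omega)]

lemma D_Ib (i : Fin (n+n1)) (k : Fin (m1+m2+r+1)) (hi : (i:ℕ) < n)
    (hk : (k:ℕ) = m1+m2+r) : DD i k = 0 := by
  unfold appendOne
  rw [dif_neg (by omega), if_pos hi]

lemma D_F1 (i : Fin (n+n1)) (k : Fin (m1+m2+r+1)) (j0 : Fin n1) (k0 : Fin (m1+m2))
    (hi : (i:ℕ) = n + j0) (hk : (k:ℕ) = k0) : DD i k = d1 j0 k0 := by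
  have h1 : (k:ℕ) < m1+m2+r := by have := k0.isLt; omega
  have hi' : ¬ (i:ℕ) < n := by omega
  unfold appendOne augDesign
  rw [dif_pos h1, dif_neg hi',
    dif_pos (show ((⟨(k:ℕ), h1⟩ : Fin (m1+m2+r)) : ℕ) < m1+m2 by
      simpa using hk ▸ k0.isLt)]
  congr 1 <;> exact Fin.ext (by simpa using by omega)

lemma D_F2 (i : Fin (n+n1)) (k : Fin (m1+m2+r+1)) (j0 : Fin n1) (k0 : Fin r)
    (hi : (i:ℕ) = n + j0) (hk : (k:ℕ) = m1+m2+k0) : DD i k = d2 j0 k0 := by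
  have h1 : (k:ℕ) < m1+m2+r := by have := k0.isLt; omega
  have hi' : ¬ (i:ℕ) < n := by omega
  unfold appendOne augDesign
  rw [dif_pos h1, dif_neg hi',
    dif_neg (show ¬ ((⟨(k:ℕ), h1⟩ : Fin (m1+m2+r)) : ℕ) < m1+m2 by simpa using by omega)]
  congr 1 <;> exact Fin.ext (by simpa using by omega)

lemma D_Fb (i : Fin (n+n1)) (k : Fin (m1+m2+r+1)) (hi : n ≤ (i:ℕ))
    (hk : (k:ℕ) = m1+m2+r) : DD i k = 1 := by
  unfold appendOne
  rw [dif_neg (by omega), if_neg (by omega)]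

end entries

lemma gval201 : gval 2 0 1 = 5/4 := by
  rw [gval2 (by norm_num) (by norm_num), if_neg (by omega)]
  simp

section regions
variable {n n1 m1 m2 r : ℕ} {d0 : Fin n → Fin (m1+m2) → ℕ}
  {d1 : Fin n1 → Fin (m1+m2) → ℕ} {d2 : Fin n1 → Fin r → ℕ}

local notation "DD" => appendOne n n1 (m1+m2+r) (augDesign n n1 (m1+m2) r d0 d1 d2)

lemma qfun_mid {k : ℕ} (h1 : m1+m2 ≤ k) (h2 : k < m1+m2+r) : qfun m1 m2 r k = 3 := by
  unfold qfun; rw [if_neg (by omega), if_pos (by omega)]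

lemma qfun_lastcol : qfun m1 m2 r (m1+m2+r) = 2 := by
  unfold qfun; rw [if_neg (by omega), if_neg (by omega)]

lemma P_II_eq (i0 j0 : Fin n) :
    (∏ k : Fin (m1+m2+r+1), gval (qfun m1 m2 r (k:ℕ))
        (DD (Fin.castAdd n1 i0) k) (DD (Fin.castAdd n1 j0) k))
    = ((3:ℝ)/2)^(r+1) *
        ∏ k0 : Fin (m1+m2), gval (qfun m1 m2 0 (k0:ℕ)) (d0 i0 k0) (d0 j0 k0) := by
  rw [Fin.prod_univ_castSucc, Fin.prod_univ_add]
  have hA : ∀ k0 : Fin (m1+m2),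
      gval (qfun m1 m2 r (((Fin.castAdd r k0).castSucc : Fin (m1+m2+r+1)):ℕ))
        (DD (Fin.castAdd n1 i0) ((Fin.castAdd r k0).castSucc))
        (DD (Fin.castAdd n1 j0) ((Fin.castAdd r k0).castSucc))
      = gval (qfun m1 m2 0 (k0:ℕ)) (d0 i0 k0) (d0 j0 k0) := by
    intro k0
    have hk : (((Fin.castAdd r k0).castSucc : Fin (m1+m2+r+1)) : ℕ) = (k0:ℕ) := by simp
    rw [D_II _ _ i0 k0 rfl hk, D_II _ _ j0 k0 rfl hk, hk, qfun_lt k0.isLt]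
  have hB : ∀ k0 : Fin r,
      gval (qfun m1 m2 r (((Fin.natAdd (m1+m2) k0).castSucc : Fin (m1+m2+r+1)):ℕ))
        (DD (Fin.castAdd n1 i0) ((Fin.natAdd (m1+m2) k0).castSucc))
        (DD (Fin.castAdd n1 j0) ((Fin.natAdd (m1+m2) k0).castSucc))
      = 3/2 := by
    intro k0
    have hk : (((Fin.natAdd (m1+m2) k0).castSucc : Fin (m1+m2+r+1)) : ℕ) = m1+m2+(k0:ℕ) := by
      simp
    rw [D_I0 _ _ i0.isLt (by omega) (by have := k0.isLt; omega),
      D_I0 _ _ j0.isLt (by omega) (by have := k0.isLt; omega), gval_self]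
  have hC : gval (qfun m1 m2 r ((Fin.last (m1+m2+r) : Fin (m1+m2+r+1)):ℕ))
      (DD (Fin.castAdd n1 i0) (Fin.last (m1+m2+r)))
      (DD (Fin.castAdd n1 j0) (Fin.last (m1+m2+r))) = 3/2 := by
    rw [D_Ib _ _ i0.isLt rfl, D_Ib _ _ j0.isLt rfl, gval_self]
  rw [Finset.prod_congr rfl fun k0 _ => hA k0, Finset.prod_congr rfl fun k0 _ => hB k0, hC,
    Finset.prod_const, Finset.card_univ, Fintype.card_fin]
  ring

lemma P_IF_eq (hd2v : ∀ i k, d2 i k = 1 ∨ d2 i k = 2) (i0 : Fin n) (j0 : Fin n1) :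
    (∏ k : Fin (m1+m2+r+1), gval (qfun m1 m2 r (k:ℕ))
        (DD (Fin.castAdd n1 i0) k) (DD (Fin.natAdd n j0) k))
    = (5:ℝ)/4 * ((23:ℝ)/18)^r *
        ∏ k0 : Fin (m1+m2), gval (qfun m1 m2 0 (k0:ℕ)) (d0 i0 k0) (d1 j0 k0) := by
  rw [Fin.prod_univ_castSucc, Fin.prod_univ_add]
  have hA : ∀ k0 : Fin (m1+m2),
      gval (qfun m1 m2 r (((Fin.castAdd r k0).castSucc : Fin (m1+m2+r+1)):ℕ))
        (DD (Fin.castAdd n1 i0) ((Fin.castAdd r k0).castSucc))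
        (DD (Fin.natAdd n j0) ((Fin.castAdd r k0).castSucc))
      = gval (qfun m1 m2 0 (k0:ℕ)) (d0 i0 k0) (d1 j0 k0) := by
    intro k0
    have hk : (((Fin.castAdd r k0).castSucc : Fin (m1+m2+r+1)) : ℕ) = (k0:ℕ) := by simp
    rw [D_II _ _ i0 k0 rfl hk, D_F1 _ _ j0 k0 rfl hk, hk, qfun_lt k0.isLt]
  have hB : ∀ k0 : Fin r,
      gval (qfun m1 m2 r (((Fin.natAdd (m1+m2) k0).castSucc : Fin (m1+m2+r+1)):ℕ))
        (DD (Fin.castAdd n1 i0) ((Fin.natAdd (m1+m2) k0).castSucc))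
        (DD (Fin.natAdd n j0) ((Fin.natAdd (m1+m2) k0).castSucc))
      = 23/18 := by
    intro k0
    have hk : (((Fin.natAdd (m1+m2) k0).castSucc : Fin (m1+m2+r+1)) : ℕ) = m1+m2+(k0:ℕ) := by
      simp
    rw [D_I0 _ _ i0.isLt (by omega) (by have := k0.isLt; omega),
      D_F2 _ _ j0 k0 rfl hk, hk, qfun_mid (by omega) (by have := k0.isLt; omega),
      gval3_zero (hd2v j0 k0)]
  have hC : gval (qfun m1 m2 r ((Fin.last (m1+m2+r) : Fin (m1+m2+r+1)):ℕ))
      (DD (Fin.castAdd n1 i0) (Fin.last (m1+m2+r)))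
      (DD (Fin.natAdd n j0) (Fin.last (m1+m2+r))) = 5/4 := by
    rw [D_Ib _ _ i0.isLt rfl, D_Fb _ _ (by simp) rfl]
    have : (Fin.last (m1+m2+r) : ℕ) = m1+m2+r := rfl
    rw [this, qfun_lastcol, gval201]
  rw [Finset.prod_congr rfl fun k0 _ => hA k0, Finset.prod_congr rfl fun k0 _ => hB k0, hC,
    Finset.prod_const, Finset.card_univ, Fintype.card_fin]
  ring

lemma P_FF_eq (i0 j0 : Fin n1) :
    (∏ k : Fin (m1+m2+r+1), gval (qfun m1 m2 r (k:ℕ))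
        (DD (Fin.natAdd n i0) k) (DD (Fin.natAdd n j0) k))
    = (3:ℝ)/2 *
        (∏ k0 : Fin (m1+m2), gval (qfun m1 m2 0 (k0:ℕ)) (d1 i0 k0) (d1 j0 k0)) *
        ∏ k0 : Fin r, gval 3 (d2 i0 k0) (d2 j0 k0) := by
  rw [Fin.prod_univ_castSucc, Fin.prod_univ_add]
  have hA : ∀ k0 : Fin (m1+m2),
      gval (qfun m1 m2 r (((Fin.castAdd r k0).castSucc : Fin (m1+m2+r+1)):ℕ))
        (DD (Fin.natAdd n i0) ((Fin.castAdd r k0).castSucc))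
        (DD (Fin.natAdd n j0) ((Fin.castAdd r k0).castSucc))
      = gval (qfun m1 m2 0 (k0:ℕ)) (d1 i0 k0) (d1 j0 k0) := by
    intro k0
    have hk : (((Fin.castAdd r k0).castSucc : Fin (m1+m2+r+1)) : ℕ) = (k0:ℕ) := by simp
    rw [D_F1 _ _ i0 k0 rfl hk, D_F1 _ _ j0 k0 rfl hk, hk, qfun_lt k0.isLt]
  have hB : ∀ k0 : Fin r,
      gval (qfun m1 m2 r (((Fin.natAdd (m1+m2) k0).castSucc : Fin (m1+m2+r+1)):ℕ))
        (DD (Fin.natAdd n i0) ((Fin.natAdd (m1+m2) k0).castSucc))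
        (DD (Fin.natAdd n j0) ((Fin.natAdd (m1+m2) k0).castSucc))
      = gval 3 (d2 i0 k0) (d2 j0 k0) := by
    intro k0
    have hk : (((Fin.natAdd (m1+m2) k0).castSucc : Fin (m1+m2+r+1)) : ℕ) = m1+m2+(k0:ℕ) := by
      simp
    rw [D_F2 _ _ i0 k0 rfl hk, D_F2 _ _ j0 k0 rfl hk, hk,
      qfun_mid (by omega) (by have := k0.isLt; omega)]
  have hC : gval (qfun m1 m2 r ((Fin.last (m1+m2+r) : Fin (m1+m2+r+1)):ℕ))
      (DD (Fin.natAdd n i0) (Fin.last (m1+m2+r)))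
      (DD (Fin.natAdd n j0) (Fin.last (m1+m2+r))) = 3/2 := by
    rw [D_Fb _ _ (by simp) rfl, D_Fb _ _ (by simp) rfl, gval_self]
  rw [Finset.prod_congr rfl fun k0 _ => hA k0, Finset.prod_congr rfl fun k0 _ => hB k0, hC]
  ring

end regions

section counting
variable {n n1 m1 m2 r : ℕ} {d0 : Fin n → Fin (m1+m2) → ℕ}
  {d1 : Fin n1 → Fin (m1+m2) → ℕ} {d2 : Fin n1 → Fin r → ℕ}

lemma d0_valid (hd0 : IsUType n m1 m2 d0) (i : Fin n) :
    ∀ k : Fin (m1+m2), if (k:ℕ) < m1 then d0 i k < 2 else d0 i k < 3 := by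
  intro k; have h2 := hd0 k; by_cases h : (k:ℕ) < m1
  · rw [if_pos h] at h2 ⊢; exact h2.1 i
  · rw [if_neg h] at h2 ⊢; exact h2.1 i

lemma col_count (hd0 : IsUType n m1 m2 d0) (hd1 : IsUType n1 m1 m2 d1) (k : Fin (m1+m2)) :
    ∑ i : Fin n, ∑ j : Fin n1, (if d0 i k = d1 j k then (1:ℝ) else 0)
      = if (k:ℕ) < m1 then (n:ℝ)*n1/2 else (n:ℝ)*n1/3 := by
  have h0 := hd0 k; have h1 := hd1 k
  by_cases h : (k:ℕ) < m1
  · rw [if_pos h] at h0 h1 ⊢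
    rw [count_balanced (q:=2) (by norm_num) (fun i => d0 i k) (fun j => d1 j k)
      h0.1 h0.2 h1.2]
    norm_num
  · rw [if_neg h] at h0 h1 ⊢
    rw [count_balanced (q:=3) (by norm_num) (fun i => d0 i k) (fun j => d1 j k)
      h0.1 h0.2 h1.2]
    norm_num

lemma d2_count (hd2 : IsBalanced n1 r d2) (k : Fin r) :
    ∑ i : Fin n1, ∑ j : Fin n1, (if d2 i k = d2 j k then (1:ℝ) else 0) = (n1:ℝ)*n1/2 := by
  set e : Fin n1 → ℕ := fun i => d2 i k - 1 with he
  have hcongr : ∀ i j : Fin n1, (if d2 i k = d2 j k then (1:ℝ) else 0)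
      = (if e i = e j then (1:ℝ) else 0) := by
    intro i j
    rcases hd2.1 i k with h|h <;> rcases hd2.1 j k with h'|h' <;> simp [he, h, h']
  have hval : ∀ i, e i < 2 := by
    intro i; rcases hd2.1 i k with h|h <;> simp [he, h]
  have hcount : ∀ v < 2, 2 * (univ.filter (fun i => e i = v)).card = n1 := by
    intro v hv
    interval_cases v
    · have : (univ.filter (fun i => e i = 0)) = (univ.filter (fun i => d2 i k = 1)) := by
        apply Finset.filter_congr; intro i _
        rcases hd2.1 i k with h|h <;> simp [he, h]
      rw [this]; exact (hd2.2 k).1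
    · have : (univ.filter (fun i => e i = 1)) = (univ.filter (fun i => d2 i k = 2)) := by
        apply Finset.filter_congr; intro i _
        rcases hd2.1 i k with h|h <;> simp [he, h]
      rw [this]; exact (hd2.2 k).2
  calc ∑ i : Fin n1, ∑ j : Fin n1, (if d2 i k = d2 j k then (1:ℝ) else 0)
      = ∑ i : Fin n1, ∑ j : Fin n1, (if e i = e j then (1:ℝ) else 0) := by
        exact Finset.sum_congr rfl fun i _ => Finset.sum_congr rfl fun j _ => hcongr i j
    _ = (n1:ℝ)*n1/2 := by
        rw [count_balanced (q:=2) (by norm_num) e e hval hcount hcount]; norm_num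

lemma weighted_colsum (m1 m2 : ℕ) (X Y : ℝ) :
    ∑ k : Fin (m1+m2), wght m1 (k:ℕ) * (if (k:ℕ) < m1 then X else Y)
      = m1*(aa*X) + m2*(bb*Y) := by
  rw [Fin.sum_univ_add]
  have e1 : ∀ i : Fin m1, wght m1 ((Fin.castAdd m2 i : Fin (m1+m2)):ℕ) *
      (if ((Fin.castAdd m2 i : Fin (m1+m2)):ℕ) < m1 then X else Y) = aa*X := by
    intro i
    rw [wght, if_pos (by simpa using i.isLt), if_pos (by simpa using i.isLt)]
  have e2 : ∀ i : Fin m2, wght m1 ((Fin.natAdd m1 i : Fin (m1+m2)):ℕ) *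
      (if ((Fin.natAdd m1 i : Fin (m1+m2)):ℕ) < m1 then X else Y) = bb*Y := by
    intro i
    rw [wght, if_neg (by simp), if_neg (by simp)]
  rw [Finset.sum_congr rfl fun i _ => e1 i, Finset.sum_congr rfl fun i _ => e2 i,
    Finset.sum_const, Finset.sum_const, Finset.card_univ, Finset.card_univ,
    Fintype.card_fin, Fintype.card_fin, nsmul_eq_mul, nsmul_eq_mul]

lemma pair_sum_swap {N N' : ℕ} {κ : Type*} [Fintype κ] (c : κ → ℝ)
    (F : Fin N → Fin N' → κ → ℝ) :
    ∑ i : Fin N, ∑ j : Fin N', ∑ k : κ, c k * F i j k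
      = ∑ k : κ, c k * ∑ i : Fin N, ∑ j : Fin N', F i j k := by
  calc ∑ i : Fin N, ∑ j : Fin N', ∑ k : κ, c k * F i j k
      = ∑ i : Fin N, ∑ k : κ, ∑ j : Fin N', c k * F i j k :=
        Finset.sum_congr rfl fun i _ => Finset.sum_comm
    _ = ∑ k : κ, ∑ i : Fin N, ∑ j : Fin N', c k * F i j k :=
        Finset.sum_comm
    _ = ∑ k : κ, c k * ∑ i : Fin N, ∑ j : Fin N', F i j k := by
        refine Finset.sum_congr rfl fun k _ => ?_
        rw [Finset.mul_sum]
        exact Finset.sum_congr rfl fun i _ => (Finset.mul_sum _ _ _).symm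

lemma cross_exponent_sum (hd0 : IsUType n m1 m2 d0) (hd1 : IsUType n1 m1 m2 d1) :
    ∑ i : Fin n, ∑ j : Fin n1,
      (∑ k : Fin (m1+m2), wght m1 (k:ℕ) * (if d0 i k = d1 j k then (1:ℝ) else 0))
    = (n:ℝ)*(n1:ℝ)*phi2 m1 m2 := by
  rw [pair_sum_swap]
  have : ∀ k : Fin (m1+m2), wght m1 (k:ℕ) *
      (∑ i : Fin n, ∑ j : Fin n1, (if d0 i k = d1 j k then (1:ℝ) else 0))
      = wght m1 (k:ℕ) * (if (k:ℕ) < m1 then (n:ℝ)*n1/2 else (n:ℝ)*n1/3) := by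
    intro k; rw [col_count hd0 hd1 k]
  rw [Finset.sum_congr rfl fun k _ => this k, weighted_colsum, phi2]
  ring

end counting

section bounds
variable {n n1 m1 m2 r : ℕ} {d0 : Fin n → Fin (m1+m2) → ℕ}
  {d1 : Fin n1 → Fin (m1+m2) → ℕ} {d2 : Fin n1 → Fin r → ℕ}

lemma cross_bound (hn : 1 ≤ n) (hn1 : 2 ≤ n1)
    (hd0 : IsUType n m1 m2 d0) (hd1 : IsUType n1 m1 m2 d1) :
    T2c n n1 m1 m2 ≤ ∑ i : Fin n, ∑ j : Fin n1,
      Real.exp (∑ k : Fin (m1+m2), wght m1 (k:ℕ) * (if d0 i k = d1 j k then (1:ℝ) else 0)) := by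
  set E : Fin n × Fin n1 → ℝ := fun p =>
    ∑ k : Fin (m1+m2), wght m1 (k:ℕ) * (if d0 p.1 k = d1 p.2 k then (1:ℝ) else 0) with hE
  have hsum : ∑ i : Fin n, ∑ j : Fin n1, Real.exp (∑ k : Fin (m1+m2),
      wght m1 (k:ℕ) * (if d0 i k = d1 j k then (1:ℝ) else 0))
      = ∑ p : Fin n × Fin n1, Real.exp (E p) :=
    (Fintype.sum_prod_type (fun p : Fin n × Fin n1 => Real.exp (E p))).symm
  rw [hsum]
  have hcard : ((univ : Finset (Fin n × Fin n1)).card : ℝ) = (n:ℝ)*n1 := by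
    simp [Finset.card_univ]
  have hEsum : ∑ p : Fin n × Fin n1, E p = (n:ℝ)*(n1:ℝ)*phi2 m1 m2 := by
    rw [hE, Fintype.sum_prod_type]
    exact cross_exponent_sum hd0 hd1
  have hJ := jensen_exp (univ : Finset (Fin n × Fin n1)) E
  rw [hcard, hEsum] at hJ
  have hpos : (0:ℝ) < (n:ℝ)*n1 := by
    have h1 : (1:ℝ) ≤ n := by exact_mod_cast hn
    have h2 : (2:ℝ) ≤ n1 := by exact_mod_cast hn1
    nlinarith
  have hmean : (n:ℝ)*(n1:ℝ)*phi2 m1 m2 / ((n:ℝ)*n1) = phi2 m1 m2 := by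
    field_simp
  rw [hmean] at hJ
  calc T2c n n1 m1 m2 = (n:ℝ)*n1 * Real.exp (phi2 m1 m2) := by rw [T2c]
    _ ≤ _ := hJ

lemma fol_bound (hn1 : 2 ≤ n1) (hd1 : IsUType n1 m1 m2 d1) (hd2 : IsBalanced n1 r d2) :
    (n1:ℝ) * (((6:ℝ)/5)^m1 * ((27:ℝ)/23)^(m2+r)) + T1c n1 m1 m2 r ≤
    ∑ i : Fin n1, ∑ j : Fin n1, Real.exp (
      (∑ k : Fin (m1+m2), wght m1 (k:ℕ) * (if d1 i k = d1 j k then (1:ℝ) else 0)) +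
      (∑ k : Fin r, bb * (if d2 i k = d2 j k then (1:ℝ) else 0))) := by
  set E : Fin n1 × Fin n1 → ℝ := fun p =>
    (∑ k : Fin (m1+m2), wght m1 (k:ℕ) * (if d1 p.1 k = d1 p.2 k then (1:ℝ) else 0)) +
    (∑ k : Fin r, bb * (if d2 p.1 k = d2 p.2 k then (1:ℝ) else 0)) with hE
  have hsum : ∑ i : Fin n1, ∑ j : Fin n1, Real.exp (
      (∑ k : Fin (m1+m2), wght m1 (k:ℕ) * (if d1 i k = d1 j k then (1:ℝ) else 0)) +
      (∑ k : Fin r, bb * (if d2 i k = d2 j k then (1:ℝ) else 0)))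
      = ∑ p ∈ (univ : Finset (Fin n1)) ×ˢ (univ : Finset (Fin n1)), Real.exp (E p) := by
    rw [Finset.sum_product]
  rw [hsum, ← Finset.diag_union_offDiag (univ : Finset (Fin n1)),
    Finset.sum_union (Finset.disjoint_diag_offDiag _)]
  have hEii : ∀ i : Fin n1, E (i, i) = m1*aa + m2*bb + r*bb := by
    intro i
    rw [hE]
    simp only [eq_self_iff_true, if_true, mul_one]
    rw [sum_wght, Finset.sum_const, Finset.card_univ, Fintype.card_fin, nsmul_eq_mul]
  have hexpc : Real.exp (m1*aa + m2*bb + r*bb) = ((6:ℝ)/5)^m1 * ((27:ℝ)/23)^(m2+r) := by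
    rw [show (m1:ℝ)*aa + m2*bb + r*bb = (m1:ℝ)*aa + ((m2:ℝ)*bb + (r:ℝ)*bb) by ring,
      Real.exp_add, Real.exp_add, Real.exp_nat_mul, Real.exp_nat_mul, Real.exp_nat_mul,
      exp_aa, exp_bb, pow_add]
  have hdiag : ∑ p ∈ (univ : Finset (Fin n1)).diag, Real.exp (E p)
      = (n1:ℝ) * (((6:ℝ)/5)^m1 * ((27:ℝ)/23)^(m2+r)) := by
    rw [Finset.sum_diag]
    rw [Finset.sum_congr rfl fun i _ => by rw [hEii i, hexpc]]
    rw [Finset.sum_const, Finset.card_univ, Fintype.card_fin, nsmul_eq_mul]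
  -- total sum of E over all pairs
  have hall : ∑ p ∈ (univ : Finset (Fin n1)) ×ˢ (univ : Finset (Fin n1)), E p
      = (n1:ℝ)*(n1:ℝ)*phi2 m1 m2 + r*(bb*((n1:ℝ)*n1/2)) := by
    rw [Finset.sum_product]
    simp only [hE]
    rw [Finset.sum_congr rfl fun i (_ : i ∈ univ) => Finset.sum_add_distrib,
      Finset.sum_add_distrib]
    congr 1
    · exact cross_exponent_sum hd1 hd1
    · rw [pair_sum_swap]
      rw [Finset.sum_congr rfl fun k (_ : k ∈ univ) => by rw [d2_count hd2 k]]
      rw [Finset.sum_const, Finset.card_univ, Fintype.card_fin, nsmul_eq_mul]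
  have hdiagE : ∑ p ∈ (univ : Finset (Fin n1)).diag, E p
      = (n1:ℝ) * ((m1:ℝ)*aa + m2*bb + r*bb) := by
    rw [Finset.sum_diag, Finset.sum_congr rfl fun i _ => hEii i, Finset.sum_const,
      Finset.card_univ, Fintype.card_fin, nsmul_eq_mul]
  have hsplitE : ∑ p ∈ (univ : Finset (Fin n1)) ×ˢ (univ : Finset (Fin n1)), E p
      = (∑ p ∈ (univ : Finset (Fin n1)).diag, E p) +
        ∑ p ∈ (univ : Finset (Fin n1)).offDiag, E p := by
    rw [← Finset.diag_union_offDiag (univ : Finset (Fin n1)),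
      Finset.sum_union (Finset.disjoint_diag_offDiag _)]
  have hoff : ∑ p ∈ (univ : Finset (Fin n1)).offDiag, E p
      = (n1:ℝ)*(n1:ℝ)*phi2 m1 m2 + r*(bb*((n1:ℝ)*n1/2))
        - (n1:ℝ) * ((m1:ℝ)*aa + m2*bb + r*bb) := by
    rw [← hall, hsplitE, hdiagE]; ring
  have hcard : (((univ : Finset (Fin n1)).offDiag.card : ℕ) : ℝ) = (n1:ℝ)*n1 - n1 := by
    rw [Finset.offDiag_card]
    have h1 : (univ : Finset (Fin n1)).card = n1 := by simp
    rw [h1, Nat.cast_sub (Nat.le_mul_of_pos_left _ (by omega))]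
    push_cast; ring
  have h2 : (2:ℝ) ≤ (n1:ℝ) := by exact_mod_cast hn1
  have hne : (n1:ℝ)*n1 - n1 ≠ 0 := by nlinarith
  have hmean : (∑ p ∈ (univ : Finset (Fin n1)).offDiag, E p) /
      (((univ : Finset (Fin n1)).offDiag.card : ℕ) : ℝ) = phi1 n1 m1 m2 r := by
    rw [hoff, hcard, div_eq_iff hne, phi1, phi2]
    have h3 : (n1:ℝ) - 1 ≠ 0 := by nlinarith
    field_simp
    ring
  have hJ := jensen_exp ((univ : Finset (Fin n1)).offDiag) E
  rw [hmean, hcard] at hJ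
  have hT1 : ((n1:ℝ)*n1 - n1) * Real.exp (phi1 n1 m1 m2 r) = T1c n1 m1 m2 r := by
    rw [T1c]; ring
  rw [hT1] at hJ
  rw [hdiag]
  linarith

end bounds


lemma key_alg (n n1 m1 m2 r : ℕ) (hn : 1 ≤ n) (hn1 : 2 ≤ n1) (wd0 : ℝ) :
    LBW3b1 n n1 m1 m2 r wd0
      = -((4:ℝ)/3)^(m1+m2+r+1) + (1/(((n+n1):ℕ):ℝ)^2) *
        (((3:ℝ)/2)^(r+1)*((n:ℝ)^2*(wd0 + ((4:ℝ)/3)^(m1+m2)))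
          + (5/4*((23:ℝ)/18)^r*(((5:ℝ)/4)^m1*((23:ℝ)/18)^m2)) * T2c n n1 m1 m2
          + ((5/4*((23:ℝ)/18)^r*(((5:ℝ)/4)^m1*((23:ℝ)/18)^m2)) * T2c n n1 m1 m2
            + (3/2*(((5:ℝ)/4)^m1*((23:ℝ)/18)^m2*((23:ℝ)/18)^r)) *
              ((n1:ℝ)*(((6:ℝ)/5)^m1*((27:ℝ)/23)^(m2+r)) + T1c n1 m1 m2 r))) := by
  have hcast : ((n+n1:ℕ):ℝ) = (n:ℝ)+(n1:ℝ) := by push_cast; ring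
  have p1 : ((4:ℝ)/3)^(m1+m2+r+1) = ((4:ℝ)/3)^(m1+m2)*((4:ℝ)/3)^(r+1) := by
    rw [show m1+m2+r+1 = (m1+m2)+(r+1) by omega, pow_add]
  have p2 : ((3:ℝ)/2)^(m1+m2+(r+1)) = ((3:ℝ)/2)^m1*((3:ℝ)/2)^m2*((3:ℝ)/2)^r*((3:ℝ)/2) := by
    rw [show m1+m2+(r+1) = ((m1+m2)+r)+1 by omega, pow_succ, pow_add, pow_add]
  have p3 : ((3:ℝ)/2)^(r+1) = ((3:ℝ)/2)^r*((3:ℝ)/2) := pow_succ _ _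
  have p4 : ((23:ℝ)/18)^(m2+r) = ((23:ℝ)/18)^m2*((23:ℝ)/18)^r := pow_add _ _ _
  have p5 : ((27:ℝ)/23)^(m2+r) = ((27:ℝ)/23)^m2*((27:ℝ)/23)^r := pow_add _ _ _
  have e1 : ((6:ℝ)/5)^m1 = ((3:ℝ)/2)^m1/((5:ℝ)/4)^m1 := by
    rw [eq_div_iff (by positivity), ← mul_pow]; norm_num
  have e2 : ((27:ℝ)/23)^m2 = ((3:ℝ)/2)^m2/((23:ℝ)/18)^m2 := by
    rw [eq_div_iff (by positivity), ← mul_pow]; norm_num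
  have e3 : ((27:ℝ)/23)^r = ((3:ℝ)/2)^r/((23:ℝ)/18)^r := by
    rw [eq_div_iff (by positivity), ← mul_pow]; norm_num
  have hNne : ((n:ℝ)+(n1:ℝ)) ≠ 0 := by
    have h1 : (1:ℝ) ≤ (n:ℝ) := by exact_mod_cast hn
    have h2 : (2:ℝ) ≤ (n1:ℝ) := by exact_mod_cast hn1
    nlinarith
  rw [LBW3b1, Cconst, hcast, p1, p2, p3, p4, p5, e1, e2, e3]
  field_simp
  ring

theorem paper_stmt_3 (n n1 m1 m2 r : ℕ) (hn : 1 ≤ n) (hn1 : 2 ≤ n1)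
    (hm : 1 ≤ m1 + m2)
    (d0 : Fin n → Fin (m1 + m2) → ℕ) (d1 : Fin n1 → Fin (m1 + m2) → ℕ)
    (d2 : Fin n1 → Fin r → ℕ)
    (hd0 : IsUType n m1 m2 d0) (hd1 : IsUType n1 m1 m2 d1) (hd2 : IsBalanced n1 r d2) :
    WD (fun k : Fin (m1 + m2 + r + 1) => qfun m1 m2 r (k : ℕ)) (appendOne n n1 (m1 + m2 + r) (augDesign n n1 (m1 + m2) r d0 d1 d2)) ≥ LBW3b1 n n1 m1 m2 r (WD (fun k : Fin (m1 + m2) => qfun m1 m2 0 (k : ℕ)) d0) := by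
    classical
  -- abbreviations
  set D := appendOne n n1 (m1 + m2 + r) (augDesign n n1 (m1 + m2) r d0 d1 d2) with hDdef
  set WD0 := WD (fun k : Fin (m1 + m2) => qfun m1 m2 0 (k : ℕ)) d0 with hWD0def
  have WD_eq1 : WD (fun k : Fin (m1+m2+r+1) => qfun m1 m2 r (k:ℕ)) D
      = -((4:ℝ)/3)^(m1+m2+r+1) + (1/((n+n1 : ℕ):ℝ)^2) *
        ∑ i : Fin (n+n1), ∑ j : Fin (n+n1), ∏ k : Fin (m1+m2+r+1),
          gval (qfun m1 m2 r (k:ℕ)) (D i k) (D j k) := rfl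
  have WD_eq0 : WD0 = -((4:ℝ)/3)^(m1+m2) + (1/((n:ℕ):ℝ)^2) *
      ∑ i : Fin n, ∑ j : Fin n, ∏ k : Fin (m1+m2),
        gval (qfun m1 m2 0 (k:ℕ)) (d0 i k) (d0 j k) := rfl
  set S0 := ∑ i : Fin n, ∑ j : Fin n, ∏ k : Fin (m1+m2),
      gval (qfun m1 m2 0 (k:ℕ)) (d0 i k) (d0 j k) with hS0def
  set CE := ∑ i : Fin n, ∑ j : Fin n1, Real.exp
      (∑ k : Fin (m1+m2), wght m1 (k:ℕ) * (if d0 i k = d1 j k then (1:ℝ) else 0)) with hCEdef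
  set FE := ∑ i : Fin n1, ∑ j : Fin n1, Real.exp (
      (∑ k : Fin (m1+m2), wght m1 (k:ℕ) * (if d1 i k = d1 j k then (1:ℝ) else 0)) +
      (∑ k : Fin r, bb * (if d2 i k = d2 j k then (1:ℝ) else 0))) with hFEdef
  set cIF : ℝ := 5/4*((23:ℝ)/18)^r*(((5:ℝ)/4)^m1*((23:ℝ)/18)^m2) with hcIF
  set cFF : ℝ := 3/2*(((5:ℝ)/4)^m1*((23:ℝ)/18)^m2*((23:ℝ)/18)^r) with hcFF
  have hd2v : ∀ i k, d2 i k = 1 ∨ d2 i k = 2 := hd2.1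
  have hd2lt : ∀ (i : Fin n1) (k : Fin r), d2 i k < 3 := by
    intro i k; rcases hd2v i k with h|h <;> omega
  -- split the big double sum
  have hsplit : (∑ i : Fin (n+n1), ∑ j : Fin (n+n1), ∏ k : Fin (m1+m2+r+1),
        gval (qfun m1 m2 r (k:ℕ)) (D i k) (D j k))
      = ((3:ℝ)/2)^(r+1) * S0 + cIF * CE + (cIF * CE + cFF * FE) := by
    have e_outer : ∀ P : Fin (n+n1) → Fin (n+n1) → ℝ,
        (∑ i : Fin (n+n1), ∑ j : Fin (n+n1), P i j)
        = ((∑ i0 : Fin n, ∑ j0 : Fin n, P (Fin.castAdd n1 i0) (Fin.castAdd n1 j0))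
          + ∑ i0 : Fin n, ∑ j0 : Fin n1, P (Fin.castAdd n1 i0) (Fin.natAdd n j0))
          + ((∑ i0 : Fin n1, ∑ j0 : Fin n, P (Fin.natAdd n i0) (Fin.castAdd n1 j0))
          + ∑ i0 : Fin n1, ∑ j0 : Fin n1, P (Fin.natAdd n i0) (Fin.natAdd n j0)) := by
      intro P
      rw [Fin.sum_univ_add (f := fun i : Fin (n+n1) => ∑ j : Fin (n+n1), P i j),
        Finset.sum_congr rfl (fun i0 (_ : i0 ∈ univ) =>
          Fin.sum_univ_add (f := fun j => P (Fin.castAdd n1 i0) j)),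
        Finset.sum_congr rfl (fun i0 (_ : i0 ∈ univ) =>
          Fin.sum_univ_add (f := fun j => P (Fin.natAdd n i0) j)),
        Finset.sum_add_distrib, Finset.sum_add_distrib]
    rw [e_outer]
    congr 1
    · congr 1
      · -- initial-initial block
        rw [Finset.sum_congr rfl fun i0 _ => Finset.sum_congr rfl fun j0 _ => P_II_eq i0 j0,
          Finset.mul_sum]
        exact Finset.sum_congr rfl fun i0 _ => (Finset.mul_sum _ _ _).symm
      · -- initial-followup block
        have hterm : ∀ (i0 : Fin n) (j0 : Fin n1),
            (∏ k : Fin (m1+m2+r+1), gval (qfun m1 m2 r (k:ℕ))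
              (D (Fin.castAdd n1 i0) k) (D (Fin.natAdd n j0) k))
            = cIF * Real.exp (∑ k : Fin (m1+m2),
                wght m1 (k:ℕ) * (if d0 i0 k = d1 j0 k then (1:ℝ) else 0)) := by
          intro i0 j0
          rw [P_IF_eq hd2v i0 j0, prod_gval m1 m2 _ _ (d0_valid hd0 i0) (d0_valid hd1 j0), hcIF]
          ring
        rw [Finset.sum_congr rfl fun i0 _ => Finset.sum_congr rfl fun j0 _ => hterm i0 j0,
          Finset.mul_sum]
        exact Finset.sum_congr rfl fun i0 _ => (Finset.mul_sum _ _ _).symm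
    · congr 1
      · -- followup-initial block
        have hterm : ∀ (i0 : Fin n1) (j0 : Fin n),
            (∏ k : Fin (m1+m2+r+1), gval (qfun m1 m2 r (k:ℕ))
              (D (Fin.natAdd n i0) k) (D (Fin.castAdd n1 j0) k))
            = cIF * Real.exp (∑ k : Fin (m1+m2),
                wght m1 (k:ℕ) * (if d0 j0 k = d1 i0 k then (1:ℝ) else 0)) := by
          intro i0 j0
          have flip : (∏ k : Fin (m1+m2+r+1), gval (qfun m1 m2 r (k:ℕ))
              (D (Fin.natAdd n i0) k) (D (Fin.castAdd n1 j0) k))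
              = ∏ k : Fin (m1+m2+r+1), gval (qfun m1 m2 r (k:ℕ))
                (D (Fin.castAdd n1 j0) k) (D (Fin.natAdd n i0) k) :=
            Finset.prod_congr rfl fun k _ => gval_comm _ _ _
          rw [flip, P_IF_eq hd2v j0 i0,
            prod_gval m1 m2 _ _ (d0_valid hd0 j0) (d0_valid hd1 i0), hcIF]
          ring
        rw [Finset.sum_congr rfl fun i0 _ => Finset.sum_congr rfl fun j0 _ => hterm i0 j0,
          Finset.sum_comm, Finset.mul_sum]
        exact Finset.sum_congr rfl fun i0 _ => (Finset.mul_sum _ _ _).symm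
      · -- followup-followup block
        have hterm : ∀ (i0 j0 : Fin n1),
            (∏ k : Fin (m1+m2+r+1), gval (qfun m1 m2 r (k:ℕ))
              (D (Fin.natAdd n i0) k) (D (Fin.natAdd n j0) k))
            = cFF * Real.exp (
              (∑ k : Fin (m1+m2), wght m1 (k:ℕ) * (if d1 i0 k = d1 j0 k then (1:ℝ) else 0)) +
              (∑ k : Fin r, bb * (if d2 i0 k = d2 j0 k then (1:ℝ) else 0))) := by
          intro i0 j0
          rw [P_FF_eq i0 j0, prod_gval m1 m2 _ _ (d0_valid hd1 i0) (d0_valid hd1 j0),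
            prod_gval3 r _ _ (hd2lt i0) (hd2lt j0), Real.exp_add, hcFF]
          ring
        rw [Finset.sum_congr rfl fun i0 _ => Finset.sum_congr rfl fun j0 _ => hterm i0 j0,
          Finset.mul_sum]
        exact Finset.sum_congr rfl fun i0 _ => (Finset.mul_sum _ _ _).symm
  -- bounds
  have hCE : T2c n n1 m1 m2 ≤ CE := cross_bound hn hn1 hd0 hd1
  have hFE : (n1:ℝ) * (((6:ℝ)/5)^m1 * ((27:ℝ)/23)^(m2+r)) + T1c n1 m1 m2 r ≤ FE :=
    fol_bound hn1 hd1 hd2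
  have hS0 : S0 = (n:ℝ)^2 * (WD0 + ((4:ℝ)/3)^(m1+m2)) := by
    have hn' : ((n:ℕ):ℝ) ≠ 0 := Nat.cast_ne_zero.2 (by omega)
    rw [WD_eq0]
    field_simp
    ring
  -- final algebraic assembly
  have key := key_alg n n1 m1 m2 r hn hn1 WD0
  rw [← hS0, ← hcIF, ← hcFF] at key
  rw [ge_iff_le, WD_eq1, hsplit, key]
  have hcIFpos : (0:ℝ) ≤ cIF := by rw [hcIF]; positivity
  have hcFFpos : (0:ℝ) ≤ cFF := by rw [hcFF]; positivity
  apply add_le_add le_rfl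
  apply mul_le_mul_of_nonneg_left _ (by positivity)
  exact add_le_add (add_le_add le_rfl (mul_le_mul_of_nonneg_left hCE hcIFpos))
    (add_le_add (mul_le_mul_of_nonneg_left hCE hcIFpos)
      (mul_le_mul_of_nonneg_left hFE hcFFpos))

end CAUD

end
end
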